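/- arXiv:2006.03667 — 14 statements merged into one kernel-verified Lean document; each statement's English description precedes it below -/
import Mathlib

section
/- Every totally path-disconnected topological space is T1. -/
open unitInterval Topology

/-- The space of paths in `X` starting at `x`, as a subspace of `C(I, X)`
with the compact-open topology. -/
abbrev PS (X : Type*) [TopologicalSpace X] (x : X) : Type _ := {f : C(I, X) // f 0 = x}

/-- The map on based path spaces induced by `p`. -/
def indMap {E X : Type*} [TopologicalSpace E] [TopologicalSpace X] (p : C(E, X)) (e : E) :
    PS E e → PS X (p e) :=
  fun α => ⟨p.comp α.1, by simp [α.2]⟩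

/-- `p` has the unique path-lifting property. -/
def UniquePathLifting {E X : Type*} [TopologicalSpace E] [TopologicalSpace X]
    (p : C(E, X)) : Prop :=
  ∀ e : E, Function.Injective (indMap p e)

/-- `p` has the path-covering property. -/
def PathCovering {E X : Type*} [TopologicalSpace E] [TopologicalSpace X]
    (p : C(E, X)) : Prop :=
  ∀ e : E, Function.Bijective (indMap p e)

/-- `p` has the continuous path-covering property. -/
def ContPathCovering {E X : Type*} [TopologicalSpace E] [TopologicalSpace X]
    (p : C(E, X)) : Prop :=
  ∀ e : E, IsHomeomorph (indMap p e)

/-- A space is totally path-disconnected if every path in it is constant. -/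
def TotallyPathDisconnected (Z : Type*) [TopologicalSpace Z] : Prop :=
  ∀ γ : C(I, Z), ∀ s t : I, γ s = γ t

/-- `p` has the homotopy lifting property with respect to `Z`. -/
def HLP {E X : Type*} [TopologicalSpace E] [TopologicalSpace X] (p : C(E, X))
    (Z : Type*) [TopologicalSpace Z] : Prop :=
  ∀ (f : C(Z, E)) (g : C(Z × I, X)), (∀ z, g (z, 0) = p (f z)) →
    ∃ G : C(Z × I, E), (∀ w, p (G w) = g w) ∧ ∀ z, G (z, 0) = f z

/-- Every totally path-disconnected space is T1. -/
theorem stmt1 {Z : Type*} [TopologicalSpace Z] (h : TotallyPathDisconnected Z) :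
    T1Space Z := by
  rw [t1Space_iff_specializes_imp_eq]
  intro x y hxy
  rw [specializes_iff_forall_open] at hxy
  set γ : I → Z := fun t => if t = 0 then y else x with hγ
  have hc : Continuous γ := by
    rw [continuous_def]
    intro U hU
    by_cases hy : y ∈ U
    · have hx : x ∈ U := hxy U hU hy
      have : γ ⁻¹' U = Set.univ := by
        ext t; simp only [Set.mem_preimage, hγ]; split <;> simp [hx, hy]
      rw [this]; exact isOpen_univ
    · by_cases hx : x ∈ U
      · have : γ ⁻¹' U = {(0 : I)}ᶜ := by
          ext t; simp only [Set.mem_preimage, Set.mem_compl_iff, Set.mem_singleton_iff, hγ]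
          split <;> simp_all
        rw [this]; exact isOpen_compl_singleton
      · have : γ ⁻¹' U = ∅ := by
          ext t; simp only [Set.mem_preimage, hγ]; split <;> simp [hx, hy]
        rw [this]; exact isOpen_empty
  have := h ⟨γ, hc⟩ 1 0
  simpa [hγ] using this
end

section
/- If p : E → X has the unique path-lifting property and X is T1, then E is T1. -/
open unitInterval Topology

/-- If `p : E → X` has the unique path-lifting property and `X` is T1, then `E` is T1. -/
theorem stmt2 {E X : Type*} [TopologicalSpace E] [TopologicalSpace X] (p : C(E, X))
    (h : UniquePathLifting p) [T1Space X] : T1Space E := by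
  rw [t1Space_iff_specializes_imp_eq]
  intro x y hspec
  -- the path t ↦ if t = 0 then y else x is continuous since x ⤳ y
  have hcont : Continuous (fun t : I => if t = 0 then y else x) := by
    rw [continuous_def]
    intro U hU
    by_cases hy : y ∈ U
    · have hx : x ∈ U := hspec.mem_open hU hy
      have : (fun t : I => if t = 0 then y else x) ⁻¹' U = Set.univ := by
        ext t; by_cases ht : t = 0 <;> simp [ht, hx, hy]
      rw [this]; exact isOpen_univ
    · by_cases hx : x ∈ U
      · have : (fun t : I => if t = 0 then y else x) ⁻¹' U = {(0 : I)}ᶜ := by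
          ext t; by_cases ht : t = 0 <;> simp [ht, hx, hy]
        rw [this]; exact isOpen_compl_singleton
      · have : (fun t : I => if t = 0 then y else x) ⁻¹' U = ∅ := by
          ext t; by_cases ht : t = 0 <;> simp [ht, hx, hy]
        rw [this]; exact isOpen_empty
  set γ : PS E y := ⟨⟨fun t => if t = 0 then y else x, hcont⟩, by simp⟩
  set c : PS E y := ⟨⟨fun _ => y, continuous_const⟩, rfl⟩
  have hpxy : p x = p y := (hspec.map p.continuous).eq
  have : γ = c := by
    apply h y
    unfold γ c
    simp only [indMap, Subtype.mk.injEq]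
    ext t
    by_cases ht : t = 0 <;> simp [ContinuousMap.comp, ht, hpxy]
  have := congrArg (fun α : PS E y => α.1 1) this
  simpa [γ, c] using this
end

section
/- If f : X → Y and g : Y → Z are maps of nonempty path-connected spaces such that g and g∘f both have the path-covering property, then f has the path-covering property. -/
open unitInterval Topology

/-- If `g` and `g ∘ f` have the path-covering property, then so does `f`. -/
theorem stmt4 {X Y Z : Type*} [TopologicalSpace X] [TopologicalSpace Y] [TopologicalSpace Z]
    [PathConnectedSpace X] [PathConnectedSpace Y] [PathConnectedSpace Z]
    (f : C(X, Y)) (g : C(Y, Z)) (hg : PathCovering g) (hgf : PathCovering (g.comp f)) :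
    PathCovering f := by
  intro e
  constructor
  · intro α β h
    apply (hgf e).injective
    apply Subtype.ext
    ext t
    have h1 : f (α.1 t) = f (β.1 t) :=
      ContinuousMap.congr_fun (congrArg Subtype.val h) t
    simp only [indMap, ContinuousMap.comp_apply]
    exact congrArg g h1
  · intro β
    obtain ⟨α, hα⟩ := (hgf e).surjective
      ⟨g.comp β.1, by simp [β.2]⟩
    refine ⟨α, ?_⟩
    apply (hg (f e)).injective
    apply Subtype.ext
    ext t
    have h1 : g (f (α.1 t)) = g (β.1 t) :=
      ContinuousMap.congr_fun (congrArg Subtype.val hα) t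
    simpa [indMap] using h1
end

section
/- If f : X → Y and g : Y → Z are maps of nonempty path-connected spaces, g is surjective, and f and g∘f both have the path-covering property, then g has the path-covering property. -/
open unitInterval Topology

/-- If `g` is surjective and `f` and `g ∘ f` have the path-covering property,
then so does `g`. -/
theorem stmt5 {X Y Z : Type*} [TopologicalSpace X] [TopologicalSpace Y] [TopologicalSpace Z]
    [PathConnectedSpace X] [PathConnectedSpace Y] [PathConnectedSpace Z]
    (f : C(X, Y)) (g : C(Y, Z)) (hgsurj : Function.Surjective g)
    (hf : PathCovering f) (hgf : PathCovering (g.comp f)) :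
    PathCovering g := by
  have hfsurj : Function.Surjective f := by
    intro y'
    obtain ⟨x₀⟩ := (inferInstance : Nonempty X)
    obtain ⟨p⟩ := PathConnectedSpace.joined (f x₀) y'
    obtain ⟨α, hα⟩ := (hf x₀).2 ⟨p.toContinuousMap, p.source⟩
    refine ⟨α.1 1, ?_⟩
    have := congrArg Subtype.val hα
    have h1 := congrFun (congrArg (⇑) this) 1
    simpa [indMap] using h1
  intro y
  obtain ⟨x, hx⟩ := hfsurj y
  constructor
  · intro β₁ β₂ h
    obtain ⟨α₁, hα₁⟩ := (hf x).2 ⟨β₁.1, β₁.2.trans hx.symm⟩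
    obtain ⟨α₂, hα₂⟩ := (hf x).2 ⟨β₂.1, β₂.2.trans hx.symm⟩
    have hv₁ : f.comp α₁.1 = β₁.1 := congrArg Subtype.val hα₁
    have hv₂ : f.comp α₂.1 = β₂.1 := congrArg Subtype.val hα₂
    have hgv : g.comp β₁.1 = g.comp β₂.1 := congrArg Subtype.val h
    have : α₁ = α₂ := by
      apply (hgf x).1
      apply Subtype.ext
      show (g.comp f).comp α₁.1 = (g.comp f).comp α₂.1
      calc (g.comp f).comp α₁.1 = g.comp (f.comp α₁.1) := rfl
        _ = g.comp (f.comp α₂.1) := by rw [hv₁, hv₂, hgv]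
        _ = (g.comp f).comp α₂.1 := rfl
    apply Subtype.ext
    rw [← hv₁, ← hv₂, this]
  · intro γ
    have hγ0 : γ.1 0 = (g.comp f) x := by simp [γ.2, hx]
    obtain ⟨α, hα⟩ := (hgf x).2 ⟨γ.1, hγ0⟩
    refine ⟨⟨f.comp α.1, by simp [α.2, hx]⟩, ?_⟩
    apply Subtype.ext
    show g.comp (f.comp α.1) = γ.1
    exact congrArg Subtype.val hα
end

section
/- A Hurewicz fibration with totally path-disconnected fibers has the continuous path-covering property; in particular, given a net of paths α_j in X starting at p(e) converging to α in the compact-open topology, the unique lifts starting at e converge to the lift of α. -/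
open unitInterval Topology

section Aux

variable {E X : Type*} [TopologicalSpace E] [TopologicalSpace X] (p : C(E, X))

/-- Transfer the HLP along a homeomorphism of test spaces. -/
lemma hlp_transfer {Z W : Type*} [TopologicalSpace Z] [TopologicalSpace W]
    (h : Z ≃ₜ W) (H : HLP p Z) : HLP p W := by
  intro f g hg
  obtain ⟨G, hG1, hG2⟩ := H (f.comp (h : C(Z, W)))
      (g.comp ((h.prodCongr (Homeomorph.refl I) : C(Z × I, W × I))))
      (fun z => by simpa using hg (h z))
  refine ⟨G.comp ((h.symm.prodCongr (Homeomorph.refl I) : C(W × I, Z × I))),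
    fun w => ?_, fun z => ?_⟩
  · simpa [Prod.map] using hG1 (h.symm w.1, w.2)
  · simpa using hG2 (h.symm z)

/-- A path whose projection is constant is constant. -/
lemma fiber_const (hfibers : ∀ x : X, TotallyPathDisconnected {e : E // p e = x})
    {x : X} (c : C(I, E)) (hc : ∀ s, p (c s) = x) (s t : I) : c s = c t := by
  have hcont : Continuous fun s : I => (⟨c s, hc s⟩ : {e : E // p e = x}) :=
    (map_continuous c).subtype_mk _
  exact congrArg Subtype.val (hfibers x ⟨_, hcont⟩ s t)

noncomputable def prI : ℝ → I := Set.projIcc (0:ℝ) 1 zero_le_one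

lemma prI_coe (t : I) : prI (t : ℝ) = t := by
  simp [prI, Set.projIcc_of_mem zero_le_one t.2]

lemma prI_one : prI 1 = 1 := by simpa using prI_coe 1

lemma prI_zero : prI 0 = 0 := by simpa using prI_coe 0

/-- Two lifts of the same path agreeing at `0` agree at `1`. -/
lemma endpoint_eq (hlpI : HLP p I)
    (hfibers : ∀ x : X, TotallyPathDisconnected {e : E // p e = x})
    (a b : C(I, E)) (hab : ∀ t, p (a t) = p (b t)) (h0 : a 0 = b 0) :
    a 1 = b 1 := by
  classical
  -- the concatenation of the reverse of `a` with `b`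
  set f : C(I, E) := ⟨fun s => if (s:ℝ) ≤ 1/2 then a (prI (1-2*s)) else b (prI (2*s-1)), by
    apply Continuous.if_le
    · exact (map_continuous a).comp (continuous_projIcc.comp (by fun_prop))
    · exact (map_continuous b).comp (continuous_projIcc.comp (by fun_prop))
    · exact continuous_subtype_val
    · exact continuous_const
    · intro s hs
      rw [show (1:ℝ)-2*s = 0 by rw [hs]; ring, show (2:ℝ)*s-1 = 0 by rw [hs]; ring, prI_zero, h0]⟩
    with hf
  set γ : C(I, X) := p.comp a with hγ
  set θ : C(I × I, I) := ⟨fun w => prI (max |2*(w.1:ℝ)-1| (w.2:ℝ)), by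
    exact Continuous.comp (g := prI) continuous_projIcc (by fun_prop)⟩ with hθ
  obtain ⟨G, hG1, hG2⟩ := hlpI f (γ.comp θ) (fun s => by
    by_cases hs : (s:ℝ) ≤ 1/2
    · have h1 : max |2*(s:ℝ)-1| ((0:I):ℝ) = 1-2*(s:ℝ) := by
        rw [Set.Icc.coe_zero, max_eq_left (abs_nonneg _), abs_of_nonpos (by linarith)]; ring
      simp only [hθ, hf, ContinuousMap.comp_apply, ContinuousMap.coe_mk, h1, if_pos hs]
      rfl
    · have h1 : max |2*(s:ℝ)-1| ((0:I):ℝ) = 2*(s:ℝ)-1 := by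
        rw [Set.Icc.coe_zero, max_eq_left (abs_nonneg _), abs_of_nonneg (by linarith)]
      simp only [hθ, hf, ContinuousMap.comp_apply, ContinuousMap.coe_mk, h1, if_neg hs]
      exact hab _)
  -- edge computations
  have hθ0 : ∀ u : I, θ (0, u) = 1 := fun u => by
    simp only [hθ, ContinuousMap.coe_mk]
    rw [show max |2*((0:I):ℝ)-1| ((u:I):ℝ) = 1 by
      rw [Set.Icc.coe_zero]; rw [show |2*(0:ℝ)-1| = 1 by norm_num]; exact max_eq_left u.2.2, prI_one]
  have hθ1 : ∀ u : I, θ (1, u) = 1 := fun u => by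
    simp only [hθ, ContinuousMap.coe_mk]
    rw [show max |2*((1:I):ℝ)-1| ((u:I):ℝ) = 1 by
      rw [Set.Icc.coe_one]; rw [show |2*(1:ℝ)-1| = 1 by norm_num]; exact max_eq_left u.2.2, prI_one]
  have hθtop : ∀ s : I, θ (s, 1) = 1 := fun s => by
    simp only [hθ, ContinuousMap.coe_mk]
    rw [show max |2*((s:I):ℝ)-1| ((1:I):ℝ) = 1 by
      rw [Set.Icc.coe_one]
      exact max_eq_right (abs_le.mpr ⟨by have := s.2.1; linarith, by have := s.2.2; linarith⟩), prI_one]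
  -- left edge is constant
  have c0 : G (0, 1) = G (0, 0) := by
    refine fiber_const p hfibers (x := γ 1) ⟨fun u => G (0, u), (map_continuous G).comp (by fun_prop)⟩
      (fun u => ?_) 1 0
    show p (G (0, u)) = γ 1
    rw [hG1, ContinuousMap.comp_apply, hθ0]
  have c1 : G (1, 1) = G (1, 0) := by
    refine fiber_const p hfibers (x := γ 1) ⟨fun u => G (1, u), (map_continuous G).comp (by fun_prop)⟩
      (fun u => ?_) 1 0
    show p (G (1, u)) = γ 1
    rw [hG1, ContinuousMap.comp_apply, hθ1]
  have ctop : G (0, 1) = G (1, 1) := by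
    refine fiber_const p hfibers (x := γ 1) ⟨fun s => G (s, 1), (map_continuous G).comp (by fun_prop)⟩
      (fun s => ?_) 0 1
    show p (G (s, 1)) = γ 1
    rw [hG1, ContinuousMap.comp_apply, hθtop]
  have f0 : f 0 = a 1 := by
    simp only [hf, ContinuousMap.coe_mk]
    rw [if_pos (by norm_num : ((0:I):ℝ) ≤ 1/2)]
    norm_num [prI_one]
  have f1 : f 1 = b 1 := by
    simp only [hf, ContinuousMap.coe_mk]
    rw [if_neg (by norm_num : ¬ ((1:I):ℝ) ≤ 1/2)]
    norm_num [prI_one]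
  calc a 1 = f 0 := f0.symm
    _ = G (0, 0) := (hG2 0).symm
    _ = G (0, 1) := c0.symm
    _ = G (1, 1) := ctop
    _ = G (1, 0) := c1
    _ = f 1 := hG2 1
    _ = b 1 := f1

end Aux

/-- A Hurewicz fibration (homotopy lifting property with respect to all spaces)
with totally path-disconnected fibers has the continuous path-covering property. -/
theorem stmt7 {E X : Type*} [TopologicalSpace E] [TopologicalSpace X] (p : C(E, X))
    (hfib : ∀ (Z : Type (max u_1 u_2)) [TopologicalSpace Z], HLP p Z)
    (hfibers : ∀ x : X, TotallyPathDisconnected {e : E // p e = x}) :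
    ContPathCovering p := by
  intro e
  have hlpI : HLP p I := hlp_transfer p Homeomorph.ulift (hfib (ULift I))
  -- injectivity
  have inj : Function.Injective (indMap p e) := by
    intro α β h
    have hab : ∀ t, p (α.1 t) = p (β.1 t) := fun t =>
      DFunLike.congr_fun (congrArg Subtype.val h) t
    refine Subtype.ext (ContinuousMap.ext fun t₀ => ?_)
    set ρ : C(I, I) := ⟨fun s => prI ((s:ℝ) * (t₀:ℝ)),
      Continuous.comp (g := prI) continuous_projIcc (by fun_prop)⟩ with hρ
    have hρ0 : ρ 0 = 0 := by simp [hρ, prI_zero]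
    have hρ1 : ρ 1 = t₀ := by
      simp only [hρ, ContinuousMap.coe_mk, Set.Icc.coe_one, one_mul]
      exact prI_coe t₀
    have := endpoint_eq p hlpI hfibers (α.1.comp ρ) (β.1.comp ρ)
      (fun s => hab (ρ s)) (by simp [hρ0, α.2, β.2])
    simpa [hρ1] using this
  -- continuous section
  have hlpP : HLP p (PS X (p e)) :=
    hlp_transfer p Homeomorph.ulift (hfib (ULift (PS X (p e))))
  obtain ⟨G, hG1, hG2⟩ := hlpP (ContinuousMap.const _ e)
    ⟨fun w => w.1.1 w.2, ContinuousEval.continuous_eval.comp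
      ((continuous_subtype_val.comp continuous_fst).prodMk continuous_snd)⟩
    (fun γ => γ.2)
  set L : PS X (p e) → PS E e := fun γ => ⟨G.curry γ, hG2 γ⟩ with hL
  have hsec : ∀ γ, indMap p e (L γ) = γ := fun γ =>
    Subtype.ext (ContinuousMap.ext fun t => hG1 (γ, t))
  exact Homeomorph.isHomeomorph
    { toFun := indMap p e
      invFun := L
      left_inv := fun α => inj (hsec (indMap p e α))
      right_inv := hsec
      continuous_toFun := by
        refine Continuous.subtype_mk ?_ _
        exact (ContinuousMap.continuous_postcomp p).comp continuous_subtype_val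
      continuous_invFun := (map_continuous G.curry).subtype_mk _ }
end

section
/- If p : E → X has the continuous path-covering property, then p is a Serre fibration. -/
open unitInterval Topology

/-- A map with the continuous path-covering property is a Serre fibration:
it has the homotopy lifting property with respect to all cubes `Iⁿ`. -/
theorem stmt8 {E X : Type*} [TopologicalSpace E] [TopologicalSpace X]
    [PathConnectedSpace E] [PathConnectedSpace X] (p : C(E, X))
    (hp : ContPathCovering p) :
    ∀ n : ℕ, HLP p (Fin n → I) := by
  intro n f g hfg
  set e₀ : E := f (fun _ => 0) with he₀
  -- contraction of the cube to the corner 0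
  have hδmem : ∀ (w : (Fin n → I) × I) (i : Fin n), (w.2 : ℝ) * (w.1 i : ℝ) ∈ I :=
    fun w i => unitInterval.mul_mem w.2.2 (w.1 i).2
  set δ : (Fin n → I) × I → (Fin n → I) := fun w i => ⟨(w.2 : ℝ) * (w.1 i : ℝ), hδmem w i⟩
    with hδdef
  have hδ : Continuous δ := continuous_pi fun i => Continuous.subtype_mk
    ((continuous_subtype_val.comp continuous_snd).mul
      (continuous_subtype_val.comp ((continuous_apply i).comp continuous_fst))) _
  have hδ0 : ∀ z, δ (z, 0) = fun _ => 0 := by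
    intro z; funext i; apply Subtype.ext; simp [hδdef]
  have hδ1 : ∀ z, δ (z, 1) = z := by
    intro z; funext i; apply Subtype.ext; simp [hδdef]
  set a : ∀ z : Fin n → I, Path (p e₀) (p (f z)) := fun z =>
    { toFun := fun s => p (f (δ (z, s)))
      continuous_toFun := p.continuous.comp (f.continuous.comp (hδ.comp (Continuous.prodMk_right z)))
      source' := by show p (f (δ (z, 0))) = p e₀; rw [hδ0]
      target' := by show p (f (δ (z, 1))) = p (f z); rw [hδ1] } with hadef
  have ha : Continuous ↿a := p.continuous.comp (f.continuous.comp hδ)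
  set b : ∀ z : Fin n → I, Path (p (f z)) (g (z, 1)) := fun z =>
    { toFun := fun t => g (z, t)
      continuous_toFun := g.continuous.comp (Continuous.prodMk_right z)
      source' := hfg z
      target' := rfl } with hbdef
  have hb : Continuous ↿b := g.continuous
  set c : ∀ z : Fin n → I, Path (p e₀) (g (z, 1)) := fun z => (a z).trans (b z) with hcdef
  have hc : Continuous ↿c := Path.trans_continuous_family a ha b hb
  set cc : C((Fin n → I) × I, X) := ⟨↿c, hc⟩ with hccdef
  set η : (Fin n → I) → PS X (p e₀) := fun z => ⟨cc.curry z, (c z).source'⟩ with hηdef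
  have hη : Continuous η := cc.curry.continuous.subtype_mk _
  set H := (hp e₀).homeomorph (indMap p e₀) with hHdef
  set α : (Fin n → I) → PS E e₀ := fun z => H.symm (η z) with hαdef
  have hα : Continuous α := H.symm.continuous.comp hη
  have hαe : ∀ z, indMap p e₀ (α z) = η z := fun z => H.apply_symm_apply (η z)
  have hαp : ∀ z t, p ((α z).1 t) = c z t := by
    intro z t
    exact congrFun (congrArg (fun q : PS X (p e₀) => (q.1 : I → X)) (hαe z)) t
  have half : (1/2 : ℝ) ∈ I := by norm_num
  -- the midpoint of the lift is f z
  have key : ∀ z, (α z).1 ⟨1/2, half⟩ = f z := by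
    intro z
    have hψmem : ∀ t : I, (t : ℝ)/2 ∈ I := by
      intro t; constructor
      · linarith [t.2.1]
      · linarith [t.2.2]
    set ψ : C(I, I) := ⟨fun t => ⟨(t : ℝ)/2, hψmem t⟩,
      Continuous.subtype_mk (continuous_subtype_val.div_const 2) _⟩ with hψdef
    have hψ0 : ψ 0 = 0 := by apply Subtype.ext; simp [hψdef]
    set A : PS E e₀ := ⟨((α z).1).comp ψ, by
      show (α z).1 (ψ 0) = e₀
      rw [hψ0]; exact (α z).2⟩ with hAdef
    set B : PS E e₀ := ⟨⟨fun t => f (δ (z, t)),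
        f.continuous.comp (hδ.comp (Continuous.prodMk_right z))⟩, by
      show f (δ (z, 0)) = e₀
      rw [hδ0]⟩ with hBdef
    have hAB : indMap p e₀ A = indMap p e₀ B := by
      apply Subtype.ext; ext t
      show p ((α z).1 (ψ t)) = p (f (δ (z, t)))
      rw [hαp]
      show (a z).trans (b z) (ψ t) = p (f (δ (z, t)))
      have hcond : ((ψ t : I) : ℝ) ≤ 1/2 := by
        show (t : ℝ)/2 ≤ 1/2
        linarith [t.2.2]
      rw [Path.trans_apply, dif_pos hcond]
      have harg : ∀ h' : (2 : ℝ) * ((ψ t : I) : ℝ) ∈ I,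
          (⟨2 * ((ψ t : I) : ℝ), h'⟩ : I) = t := fun h' => Subtype.ext (by
        show 2 * ((t : ℝ)/2) = (t : ℝ)
        ring)
      simp only [harg]
      rfl
    have hABeq : A = B := (hp e₀).injective hAB
    have h1 : (A.1 : C(I, E)) 1 = B.1 1 := by rw [hABeq]
    have hl : (A.1 : C(I, E)) 1 = (α z).1 ⟨1/2, half⟩ := by
      show (α z).1 (ψ 1) = (α z).1 ⟨1/2, half⟩
      have hψ1 : ψ 1 = ⟨1/2, half⟩ := Subtype.ext (by
        show ((1 : I) : ℝ)/2 = 1/2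
        norm_num)
      rw [hψ1]
    have hr : (B.1 : C(I, E)) 1 = f z := by
      show f (δ (z, 1)) = f z
      rw [hδ1]
    rw [hl, hr] at h1
    exact h1
  -- construct the lift
  have hφmem : ∀ t : I, ((t : ℝ) + 1)/2 ∈ I := by
    intro t; constructor
    · linarith [t.2.1]
    · linarith [t.2.2]
  refine ⟨⟨fun w => (α w.1).1 ⟨((w.2 : ℝ) + 1)/2, hφmem w.2⟩, ?_⟩, ?_, ?_⟩
  · exact continuous_eval.comp
      ((continuous_subtype_val.comp (hα.comp continuous_fst)).prodMk
        (Continuous.subtype_mk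
          (((continuous_subtype_val.comp continuous_snd).add continuous_const).div_const 2) _))
  · rintro ⟨z, t⟩
    show p ((α z).1 ⟨((t : ℝ) + 1)/2, hφmem t⟩) = g (z, t)
    rw [hαp]
    show (a z).trans (b z) ⟨((t : ℝ) + 1)/2, hφmem t⟩ = g (z, t)
    rw [Path.trans_apply]
    split_ifs with h
    · have ht0 : (t : ℝ) = 0 := by
        have : (t : ℝ) ≤ 0 := by
          simp only at h
          linarith
        linarith [t.2.1]
      have harg : ∀ h' : (2 : ℝ) * (((t : ℝ) + 1)/2) ∈ I,
          (⟨2 * (((t : ℝ) + 1)/2), h'⟩ : I) = 1 := fun h' => Subtype.ext (by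
        show 2 * (((t : ℝ) + 1)/2) = ((1 : I) : ℝ)
        rw [ht0]; norm_num)
      simp only [harg]
      have : (t : I) = 0 := Subtype.ext ht0
      rw [this, hfg z]
      exact (a z).target'
    · have harg : ∀ h' : (2 : ℝ) * (((t : ℝ) + 1)/2) - 1 ∈ I,
          (⟨2 * (((t : ℝ) + 1)/2) - 1, h'⟩ : I) = t := fun h' => Subtype.ext (by
        show 2 * (((t : ℝ) + 1)/2) - 1 = (t : ℝ)
        ring)
      simp only [harg]
      rfl
  · intro z
    show (α z).1 ⟨(((0 : I) : ℝ) + 1)/2, hφmem 0⟩ = f z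
    have h0 : (⟨(((0 : I) : ℝ) + 1)/2, hφmem 0⟩ : I) = ⟨1/2, half⟩ := by
      apply Subtype.ext
      show (((0 : I) : ℝ) + 1)/2 = 1/2
      norm_num
    rw [h0]
    exact key z
end

section
/- If p : E → X has the continuous path-covering property, then for every e ∈ E and n ≥ 1, the induced map (E,e)^(Iⁿ,0) → (X,p(e))^(Iⁿ,0) between relative mapping spaces with the compact-open topology, given by f ↦ p∘f, is a homeomorphism. -/
open unitInterval Topology

section Aux

open ContinuousMap

/-- The straight-line path from the origin to `t` in the cube. -/
def lineTo (n : ℕ) : C((Fin n → I), C(I, Fin n → I)) :=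
  ContinuousMap.curry ⟨fun ts i => ts.2 * ts.1 i, by
    apply continuous_pi
    intro i
    apply Continuous.subtype_mk
    exact (continuous_subtype_val.comp continuous_snd).mul
      (continuous_subtype_val.comp ((continuous_apply i).comp continuous_fst))⟩

lemma lineTo_zero (n : ℕ) (t : Fin n → I) : lineTo n t 0 = fun _ => 0 := by
  funext i
  exact Subtype.ext (zero_mul _)

lemma lineTo_one (n : ℕ) (t : Fin n → I) : lineTo n t 1 = t := by
  funext i
  exact Subtype.ext (one_mul _)

lemma lineTo_of_zero (n : ℕ) (s : I) : lineTo n (fun _ => 0) s = fun _ => 0 := by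
  funext i
  exact Subtype.ext (mul_zero _)

end Aux

/-- If `p` has the continuous path-covering property then the induced map on the
relative mapping spaces `(E,e)^(Iⁿ,0) → (X,p(e))^(Iⁿ,0)` (compact-open topology)
is a homeomorphism for all `n ≥ 1`. -/
theorem stmt9 {E X : Type*} [TopologicalSpace E] [TopologicalSpace X] (p : C(E, X))
    (hp : ContPathCovering p) (e : E) (n : ℕ) (hn : 1 ≤ n) :
    IsHomeomorph (fun f : {f : C((Fin n → I), E) // f (fun _ => 0) = e} =>
      (⟨p.comp f.1, by simp [f.2]⟩ :
        {g : C((Fin n → I), X) // g (fun _ => 0) = p e})) := by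
  classical
  set Φ : PS E e ≃ₜ PS X (p e) := (hp e).homeomorph (indMap p e) with hΦ
  have hΦ_apply : ∀ α : PS E e, Φ α = indMap p e α := fun _ => rfl
  have hmem : ∀ (g : {g : C((Fin n → I), X) // g (fun _ => 0) = p e}) (t : Fin n → I),
      (g.1.comp (lineTo n t)) 0 = p e := by
    intro g t
    simp [ContinuousMap.comp_apply, lineTo_zero, g.2]
  set L : {g : C((Fin n → I), X) // g (fun _ => 0) = p e} → (Fin n → I) → E :=
    fun g t => (Φ.symm ⟨g.1.comp (lineTo n t), hmem g t⟩).1 1 with hL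
  have hLcont : ∀ g, Continuous (L g) := by
    intro g
    apply (continuous_eval_const (1 : I)).comp
    apply continuous_subtype_val.comp
    apply Φ.symm.continuous.comp
    apply Continuous.subtype_mk
    exact (g.1.continuous_postcomp).comp (lineTo n).continuous
  have hpL : ∀ g t, p (L g t) = g.1 t := by
    intro g t
    have h1 : indMap p e (Φ.symm ⟨g.1.comp (lineTo n t), hmem g t⟩)
        = ⟨g.1.comp (lineTo n t), hmem g t⟩ := by
      rw [← hΦ_apply]; exact Φ.apply_symm_apply _
    have h2 := congrArg (fun α : PS X (p e) => α.1 1) h1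
    simpa [indMap, lineTo_one] using h2
  have hL0 : ∀ g, L g (fun _ => 0) = e := by
    intro g
    have hconst : (⟨g.1.comp (lineTo n (fun _ => 0)), hmem g _⟩ : PS X (p e))
        = Φ ⟨ContinuousMap.const I e, rfl⟩ := by
      apply Subtype.ext
      ext s
      show g.1 (lineTo n (fun _ => 0) s) = _
      rw [lineTo_of_zero, g.2]
      simp [hΦ_apply, indMap]
    rw [hL]
    simp only [hconst, Φ.symm_apply_apply]
    rfl
  have hLF : ∀ (f : {f : C((Fin n → I), E) // f (fun _ => 0) = e}) t,
      L ⟨p.comp f.1, by simp [f.2]⟩ t = f.1 t := by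
    intro f t
    have hft : (f.1.comp (lineTo n t)) 0 = e := by
      simp [ContinuousMap.comp_apply, lineTo_zero, f.2]
    have h1 : (⟨(p.comp f.1).comp (lineTo n t),
        hmem ⟨p.comp f.1, by simp [f.2]⟩ t⟩ : PS X (p e))
        = Φ ⟨f.1.comp (lineTo n t), hft⟩ := by
      apply Subtype.ext
      ext s
      simp [hΦ_apply, indMap]
    rw [hL]
    simp only [h1, Φ.symm_apply_apply]
    simp [ContinuousMap.comp_apply, lineTo_one]
  rw [isHomeomorph_iff_exists_homeomorph]
  refine ⟨⟨⟨fun f => ⟨p.comp f.1, by simp [f.2]⟩,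
      fun g => ⟨⟨L g, hLcont g⟩, hL0 g⟩, ?_, ?_⟩, ?_, ?_⟩, rfl⟩
  · intro f
    apply Subtype.ext
    ext t
    exact hLF f t
  · intro g
    apply Subtype.ext
    ext t
    exact hpL g t
  · exact Continuous.subtype_mk ((p.continuous_postcomp).comp continuous_subtype_val) _
  · apply Continuous.subtype_mk
    apply ContinuousMap.continuous_of_continuous_uncurry
    exact (continuous_eval_const (1 : I)).comp
      (continuous_subtype_val.comp (Φ.symm.continuous.comp
        (Continuous.subtype_mk (Continuous.compCM
          (continuous_subtype_val.comp continuous_fst)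
          ((lineTo n).continuous.comp continuous_snd)) _)))
end

section
/- If p : E → X has the continuous path-covering property, e ∈ E, and Z is a contractible path-connected space with basepoint z, then the map F : (E,e)^(Z,z) → (X,p(e))^(Z,z), F(f) = p∘f, on based mapping sets is a bijection. -/
open unitInterval Topology

/-- If `p` has the continuous path-covering property and `Z` is a contractible
path-connected based space, then composition with `p` is a bijection on based
mapping sets `(E,e)^(Z,z) → (X,p(e))^(Z,z)`. -/
theorem stmt10 {E X Z : Type*} [TopologicalSpace E] [TopologicalSpace X]
    [TopologicalSpace Z] [PathConnectedSpace Z] [ContractibleSpace Z]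
    (p : C(E, X)) (hp : ContPathCovering p) (e : E) (z : Z) :
    Function.Bijective (fun f : {f : C(Z, E) // f z = e} =>
      (⟨p.comp f.1, by simp [f.2]⟩ : {g : C(Z, X) // g z = p e})) := by
  constructor
  · -- Injectivity
    rintro ⟨f₁, h₁⟩ ⟨f₂, h₂⟩ h
    simp only [Subtype.mk.injEq] at h ⊢
    ext w
    obtain ⟨γ⟩ := PathConnectedSpace.joined z w
    have key : (⟨f₁.comp γ.toContinuousMap, by simp [h₁]⟩ : PS E e) =
        ⟨f₂.comp γ.toContinuousMap, by simp [h₂]⟩ := by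
      apply (hp e).injective
      apply Subtype.ext
      ext t
      exact ContinuousMap.congr_fun h (γ t)
    have := congrArg (fun a : PS E e => a.1 1) key
    simpa using this
  · -- Surjectivity
    rintro ⟨g, hg⟩
    obtain ⟨c, ⟨K⟩⟩ := id_nullhomotopic Z
    let H : C(Z × I, Z) := K.symm.toContinuousMap.comp ContinuousMap.prodSwap
    have H0 : ∀ w, H (w, 0) = c := fun w => K.symm.apply_zero w
    have H1 : ∀ w, H (w, 1) = w := fun w => K.symm.apply_one w
    let η : C(Z, C(I, Z)) := H.curry
    have hη : ∀ w t, η w t = H (w, t) := fun _ _ => rfl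
    let σI : C(I, I) := ⟨σ, unitInterval.continuous_symm⟩
    -- the path θ from c to z, and the reversed path downstairs
    set θ : C(I, Z) := η z with hθ
    have hdp0 : (g.comp (θ.comp σI)) 0 = p e := by
      simp [hθ, hη, σI, symm_zero, H1, hg]
    set downPath : PS X (p e) := ⟨g.comp (θ.comp σI), hdp0⟩ with hdpdef
    set α : PS E e := ((hp e).homeomorph _).symm downPath with hαdef
    have hα : indMap p e α = downPath := by
      have := ((hp e).homeomorph _).apply_symm_apply downPath
      simpa [hαdef] using this
    set e' : E := α.1 1 with he'
    have hαfun : ∀ t, p (α.1 t) = g (θ (σ t)) := by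
      intro t
      have := congrArg (fun a : PS X (p e) => a.1 t) hα
      simpa [indMap, downPath, σI] using this
    have hpe' : p e' = g c := by
      have := hαfun 1
      simpa [he', symm_one, hθ, hη, H0] using this
    -- the family of lifted paths
    have hΨ0 : ∀ w, (g.comp (η w)) 0 = p e' := by
      intro w
      simp [hη, H0, hpe']
    set Ψ : Z → PS X (p e') := fun w => ⟨g.comp (η w), hΨ0 w⟩ with hΨdef
    have hΨcont : Continuous Ψ := by
      apply Continuous.subtype_mk
      exact (ContinuousMap.continuous_postcomp g).comp η.continuous
    set L : Z → PS E e' := fun w => ((hp e').homeomorph _).symm (Ψ w) with hLdef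
    have hL : ∀ w, indMap p e' (L w) = Ψ w := by
      intro w
      have := ((hp e').homeomorph _).apply_symm_apply (Ψ w)
      simpa [hLdef] using this
    have hLfun : ∀ w t, p ((L w).1 t) = g (H (w, t)) := by
      intro w t
      have := congrArg (fun a : PS X (p e') => a.1 t) (hL w)
      simpa [indMap, hΨdef, hη] using this
    set f : Z → E := fun w => (L w).1 1 with hfdef
    have hf : Continuous f :=
      (continuous_eval_const (1 : I)).comp
        (continuous_subtype_val.comp (((hp e').homeomorph _).symm.continuous.comp hΨcont))
    -- basepoint: f z = e
    have hβ0 : (α.1.comp σI) 0 = e' := by simp [σI, symm_zero, he']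
    have hLz : L z = ⟨α.1.comp σI, hβ0⟩ := by
      apply ((hp e').homeomorph _).symm_apply_eq.mpr
      have : indMap p e' (⟨α.1.comp σI, hβ0⟩ : PS E e') = Ψ z := by
        apply Subtype.ext
        ext t
        show p (α.1 (σ t)) = g (η z t)
        rw [hαfun (σ t), symm_symm]
      simpa using this.symm
    have hfz : f z = e := by
      have := congrArg (fun a : PS E e' => a.1 1) hLz
      simp only [hfdef] at *
      rw [this]
      show α.1 (σ 1) = e
      rw [symm_one]
      exact α.2
    refine ⟨⟨⟨f, hf⟩, hfz⟩, ?_⟩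
    apply Subtype.ext
    ext w
    show p (f w) = g w
    rw [hfdef]
    simp only
    rw [hLfun w 1, H1]
end

section
/- If p : E → X has the continuous path-covering property, then the induced map on free path spaces P(p) : P(E) → P(X) (with compact-open topologies) also has the continuous path-covering property. -/
set_option maxHeartbeats 1000000
set_option synthInstance.maxHeartbeats 400000

open unitInterval Topology

/-! ### Auxiliary material -/

/-- Retraction of `ℝ` onto the unit interval. -/
noncomputable def pr (r : ℝ) : I := Set.projIcc 0 1 zero_le_one r

@[fun_prop]
lemma continuous_pr : Continuous pr := continuous_projIcc (h := zero_le_one)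

lemma pr_coe {x : ℝ} (h0 : 0 ≤ x) (h1 : x ≤ 1) : ((pr x : I) : ℝ) = x := by
  simp [pr, Set.projIcc, min_eq_right h1, max_eq_right h0]

lemma pr_coe' (t : I) : pr (t : ℝ) = t :=
  Subtype.ext (pr_coe t.2.1 t.2.2)

lemma pr_zero : pr 0 = 0 := by
  have := pr_coe' 0; simpa using this

namespace Stmt11Aux

variable {E X : Type*} [TopologicalSpace E] [TopologicalSpace X]

lemma continuous_indMap (p : C(E, X)) (e : E) : Continuous (indMap p e) :=
  Continuous.subtype_mk
    ((ContinuousMap.continuous_postcomp p).comp continuous_subtype_val) _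

variable (p : C(E, X)) (α : C(I, E))

/-- The induced map on free path spaces. -/
abbrev Pmap : C(C(I, E), C(I, X)) :=
  ⟨fun α : C(I, E) => p.comp α, ContinuousMap.continuous_postcomp p⟩

/-- Concatenation downstairs: `p∘α` (scaled to `[0,t]`) on `[0,1/2]`,
then `s ↦ β s t` on `[1/2,1]`. -/
noncomputable def bigD
    (w : {β : C(I, C(I, X)) // β 0 = p.comp α} × I × I) : X :=
  if ((w.2.2 : ℝ)) ≤ 1/2 then p (α (pr ((w.2.1 : ℝ) * (2 * (w.2.2 : ℝ)))))
  else w.1.1 (pr (2 * (w.2.2 : ℝ) - 1)) w.2.1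

lemma continuous_bigD : Continuous (bigD p α) := by
  apply Continuous.if_le
  · fun_prop
  · have h1 : Continuous fun w : {β : C(I, C(I, X)) // β 0 = p.comp α} × I × I =>
        ((w.1.1 : C(I, C(I, X))), pr (2 * (w.2.2 : ℝ) - 1)) :=
      (continuous_subtype_val.comp continuous_fst).prodMk
        (continuous_pr.comp (by fun_prop))
    have h2 : Continuous fun w : {β : C(I, C(I, X)) // β 0 = p.comp α} × I × I =>
        w.1.1 (pr (2 * (w.2.2 : ℝ) - 1)) := continuous_eval.comp h1
    exact continuous_eval.comp (h2.prodMk (continuous_fst.comp continuous_snd))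
  · fun_prop
  · fun_prop
  · rintro ⟨β, t, u⟩ hu
    simp only
    rw [hu]
    have e1 : (t : ℝ) * (2 * (1/2 : ℝ)) = t := by ring
    have e2 : 2 * (1/2 : ℝ) - 1 = 0 := by ring
    rw [e1, e2, pr_coe' t, pr_zero, β.2]
    rfl

lemma bigD_zero (β : {β : C(I, C(I, X)) // β 0 = p.comp α}) (t : I) :
    bigD p α (β, t, 0) = p (α 0) := by
  simp only [bigD]
  rw [if_pos (by norm_num)]
  norm_num [pr_zero]

/-- The concatenated path downstairs, as an element of the based path space. -/
noncomputable def dp (β : {β : C(I, C(I, X)) // β 0 = p.comp α}) (t : I) :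
    PS X (p (α 0)) :=
  ⟨⟨fun u => bigD p α (β, t, u), (continuous_bigD p α).comp (by fun_prop)⟩,
    bigD_zero p α β t⟩

lemma continuous_dp :
    Continuous fun w : {β : C(I, C(I, X)) // β 0 = p.comp α} × I => dp p α w.1 w.2 := by
  apply Continuous.subtype_mk
  apply ContinuousMap.continuous_of_continuous_uncurry
  exact (continuous_bigD p α).comp (by fun_prop)

variable (hp : ContPathCovering p)

/-- The lift of the concatenated path, starting at `α 0`. -/
noncomputable def lp (β : {β : C(I, C(I, X)) // β 0 = p.comp α}) (t : I) :
    PS E (α 0) :=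
  ((hp (α 0)).homeomorph (indMap p (α 0))).symm (dp p α β t)

lemma continuous_lp :
    Continuous fun w : {β : C(I, C(I, X)) // β 0 = p.comp α} × I =>
      lp p α hp w.1 w.2 :=
  ((hp (α 0)).homeomorph (indMap p (α 0))).symm.continuous.comp (continuous_dp p α)

lemma lp_lifts (β : {β : C(I, C(I, X)) // β 0 = p.comp α}) (t : I) :
    indMap p (α 0) (lp p α hp β t) = dp p α β t := by
  exact ((hp (α 0)).homeomorph (indMap p (α 0))).apply_symm_apply (dp p α β t)

lemma lp_apply (β : {β : C(I, C(I, X)) // β 0 = p.comp α}) (t u : I) :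
    p ((lp p α hp β t).1 u) = bigD p α (β, t, u) := by
  have h := congrArg Subtype.val (lp_lifts p α hp β t)
  exact ContinuousMap.congr_fun h u

/-- Key uniqueness computation: the first half of the lift retraces `α`. -/
lemma lp_half (β : {β : C(I, C(I, X)) // β 0 = p.comp α}) (t : I) :
    (lp p α hp β t).1 (pr (1/2)) = α t := by
  set L := lp p α hp β t with hL
  have hμc : Continuous fun u : I => L.1 (pr ((u : ℝ) / 2)) :=
    L.1.continuous.comp (continuous_pr.comp (by fun_prop))
  have hνc : Continuous fun u : I => α (pr ((t : ℝ) * (u : ℝ))) :=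
    α.continuous.comp (continuous_pr.comp (by fun_prop))
  set μ : PS E (α 0) := ⟨⟨fun u => L.1 (pr ((u : ℝ) / 2)), hμc⟩, by
    simp only [ContinuousMap.coe_mk]
    norm_num [pr_zero, L.2]⟩ with hμ
  set ν : PS E (α 0) := ⟨⟨fun u => α (pr ((t : ℝ) * (u : ℝ))), hνc⟩, by
    simp only [ContinuousMap.coe_mk]
    norm_num [pr_zero]⟩ with hν
  have key : indMap p (α 0) μ = indMap p (α 0) ν := by
    apply Subtype.ext
    apply ContinuousMap.ext
    intro u
    show p (L.1 (pr ((u : ℝ) / 2))) = p (α (pr ((t : ℝ) * (u : ℝ))))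
    rw [hL, lp_apply]
    have hmem0 : (0 : ℝ) ≤ (u : ℝ) / 2 := by have := u.2.1; linarith
    have hmem1 : (u : ℝ) / 2 ≤ 1 := by have := u.2.2; linarith
    simp only [bigD]
    rw [pr_coe hmem0 hmem1, if_pos (by have := u.2.2; linarith)]
    have e : (t : ℝ) * (2 * ((u : ℝ) / 2)) = (t : ℝ) * (u : ℝ) := by ring
    rw [e]
  have hμν : μ = ν := (hp (α 0)).injective key
  have h1 := congrArg (fun z : PS E (α 0) => z.1 1) hμν
  simp only [hμ, hν, ContinuousMap.coe_mk] at h1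
  rw [show ((1 : I) : ℝ) = (1 : ℝ) from rfl] at h1
  rw [show ((1 : ℝ) / 2) = (1/2 : ℝ) from rfl] at h1
  rw [h1, mul_one, pr_coe' t]

/-- The lifted square, i.e. the inverse map. -/
noncomputable def inv (β : {β : C(I, C(I, X)) // β 0 = p.comp α}) :
    {f : C(I, C(I, E)) // f 0 = α} := by
  refine ⟨ContinuousMap.curry ⟨fun w : I × I =>
    (lp p α hp β w.2).1 (pr (((w.1 : ℝ) + 1) / 2)), ?_⟩, ?_⟩
  · have h1 : Continuous fun w : I × I => ((lp p α hp β w.2).1 : C(I, E)) :=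
      continuous_subtype_val.comp
        ((continuous_lp p α hp).comp (Continuous.prodMk continuous_const continuous_snd))
    have h2 : Continuous fun w : I × I => pr (((w.1 : ℝ) + 1) / 2) :=
      continuous_pr.comp (by fun_prop)
    exact continuous_eval.comp (h1.prodMk h2)
  · apply ContinuousMap.ext
    intro t
    show (lp p α hp β t).1 (pr ((((0 : I) : ℝ) + 1) / 2)) = α t
    rw [show ((((0 : I) : ℝ) + 1) / 2) = (1/2 : ℝ) by norm_num]
    exact lp_half p α hp β t

/-- The inverse map is a section of the induced map. -/
lemma inv_spec (β : {β : C(I, C(I, X)) // β 0 = p.comp α}) :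
    indMap (Pmap p) α (inv p α hp β) = β := by
  apply Subtype.ext
  apply ContinuousMap.ext
  intro s
  apply ContinuousMap.ext
  intro t
  simp only [indMap, inv, ContinuousMap.comp_apply, ContinuousMap.coe_mk,
    ContinuousMap.curry_apply]
  rw [lp_apply]
  have hmem0 : (0 : ℝ) ≤ ((s : ℝ) + 1) / 2 := by have := s.2.1; linarith
  have hmem1 : ((s : ℝ) + 1) / 2 ≤ 1 := by have := s.2.2; linarith
  simp only [bigD]
  rw [pr_coe hmem0 hmem1]
  by_cases hc : ((s : ℝ) + 1) / 2 ≤ 1/2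
  · rw [if_pos hc]
    have hs0 : s = 0 := Subtype.ext (by
      show (s : ℝ) = ((0 : I) : ℝ)
      have h0 : ((0 : I) : ℝ) = 0 := rfl
      rw [h0]
      have := s.2.1
      linarith)
    subst hs0
    have e : (t : ℝ) * (2 * ((((0 : I) : ℝ) + 1) / 2)) = (t : ℝ) := by norm_num
    rw [e, pr_coe' t, β.2]
    rfl
  · rw [if_neg hc]
    have e : 2 * (((s : ℝ) + 1) / 2) - 1 = (s : ℝ) := by ring
    rw [e, pr_coe' s]

end Stmt11Aux

/-- If `p : E → X` has the continuous path-covering property, then so does the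
induced map `P(p) : P(E) → P(X)` on free path spaces (compact-open topology). -/
theorem stmt11 {E X : Type*} [TopologicalSpace E] [TopologicalSpace X] (p : C(E, X))
    (hp : ContPathCovering p) :
    ContPathCovering (⟨fun α : C(I, E) => p.comp α, ContinuousMap.continuous_postcomp p⟩ :
      C(C(I, E), C(I, X))) := by
  intro α
  rw [isHomeomorph_iff_exists_inverse]
  have hFc : Continuous (indMap (Stmt11Aux.Pmap p) α) :=
    Stmt11Aux.continuous_indMap (Stmt11Aux.Pmap p) α
  have hinj : Function.Injective (indMap (Stmt11Aux.Pmap p) α) := by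
    intro γ γ' h
    apply Subtype.ext
    apply ContinuousMap.ext
    intro s
    apply ContinuousMap.ext
    intro t
    have hγc : Continuous fun s : I => γ.1 s t :=
      (continuous_eval_const t).comp γ.1.continuous
    have hγ'c : Continuous fun s : I => γ'.1 s t :=
      (continuous_eval_const t).comp γ'.1.continuous
    set γt : PS E (α t) := ⟨⟨fun s => γ.1 s t, hγc⟩, by
      simp only [ContinuousMap.coe_mk]; rw [γ.2]⟩ with hγt
    set γ't : PS E (α t) := ⟨⟨fun s => γ'.1 s t, hγ'c⟩, by
      simp only [ContinuousMap.coe_mk]; rw [γ'.2]⟩ with hγ't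
    have key : indMap p (α t) γt = indMap p (α t) γ't := by
      apply Subtype.ext
      apply ContinuousMap.ext
      intro s'
      show p (γ.1 s' t) = p (γ'.1 s' t)
      have h1 := congrArg Subtype.val h
      exact ContinuousMap.congr_fun (ContinuousMap.congr_fun h1 s') t
    have h2 := (hp (α t)).injective key
    exact congrFun (congrArg (fun z : PS E (α t) => (z.1 : I → E)) h2) s
  refine ⟨hFc, Stmt11Aux.inv p α hp, ?_, Stmt11Aux.inv_spec p α hp, ?_⟩
  · intro γ
    exact hinj (Stmt11Aux.inv_spec p α hp (indMap (Stmt11Aux.Pmap p) α γ))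
  · apply Continuous.subtype_mk
    apply ContinuousMap.continuous_of_continuous_uncurry
    apply ContinuousMap.continuous_of_continuous_uncurry
    have h1 : Continuous fun w : ({β : C(I, C(I, X)) // β 0 = p.comp α} × I) × I =>
        ((Stmt11Aux.lp p α hp w.1.1 w.2).1 : C(I, E)) :=
      continuous_subtype_val.comp ((Stmt11Aux.continuous_lp p α hp).comp
        ((continuous_fst.comp continuous_fst).prodMk continuous_snd))
    have h2 : Continuous fun w : ({β : C(I, C(I, X)) // β 0 = p.comp α} × I) × I =>
        pr (((w.1.2 : ℝ) + 1) / 2) := continuous_pr.comp (by fun_prop)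
    exact continuous_eval.comp (h1.prodMk h2)
end

section
/- Every semicovering map is a Hurewicz fibration with discrete fibers. -/
open unitInterval Topology

open Set

lemma lift_unique {E X : Type*} [TopologicalSpace E] [TopologicalSpace X] (p : C(E,X)) (hp : ContPathCovering p) (β₁ β₂ : C(I,E))
    (h0 : β₁ 0 = β₂ 0) (hc : ∀ t, p (β₁ t) = p (β₂ t)) : β₁ = β₂ := by
  have h := (hp (β₁ 0)).bijective.injective (a₁ := ⟨β₁, rfl⟩) (a₂ := ⟨β₂, h0.symm⟩)
    (by apply Subtype.ext; exact ContinuousMap.ext fun t => hc t)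
  exact congrArg Subtype.val h

lemma glueOn {E Z : Type*} [TopologicalSpace E] [TopologicalSpace Z] {b₁ b₂ : I} (hb : b₁ ≤ b₂)
    {N : Set Z} {H1 H2 : Z × I → E}
    (h1 : ContinuousOn H1 (N ×ˢ Icc 0 b₁)) (h2 : ContinuousOn H2 (N ×ˢ Icc b₁ b₂))
    (heq : ∀ z ∈ N, H1 (z, b₁) = H2 (z, b₁)) :
    ContinuousOn (fun w => if w.2 ≤ b₁ then H1 w else H2 w) (N ×ˢ Icc 0 b₂) := by
  set A := N ×ˢ Icc 0 b₁ with hA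
  set B := N ×ˢ Icc b₁ b₂ with hB
  have hsub : N ×ˢ Icc 0 b₂ ⊆ A ∪ B := by
    rintro ⟨z, t⟩ ⟨hz, ht⟩
    rcases le_total t b₁ with h | h
    · exact Or.inl ⟨hz, ht.1, h⟩
    · exact Or.inr ⟨hz, h, ht.2⟩
  refine ContinuousOn.mono ?_ hsub
  rintro ⟨z, t⟩ hw
  rw [continuousWithinAt_union]
  constructor
  · rcases le_or_gt t b₁ with h | h
    · have hwA : (z, t) ∈ A := by
        rcases hw with ⟨hz, _⟩ | ⟨hz, _⟩ <;> exact ⟨hz, unitInterval.nonneg', h⟩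
      refine ((h1.continuousWithinAt hwA).congr ?_ ?_)
      · rintro ⟨z', t'⟩ ⟨_, _, ht'⟩; simp [ht']
      · simp [h]
    · apply continuousWithinAt_of_notMem_closure
      intro hcl
      have : (z, t) ∈ (univ : Set Z) ×ˢ Icc 0 b₁ :=
        closure_minimal (prod_mono (subset_univ N) subset_rfl)
          (isClosed_univ.prod isClosed_Icc) hcl
      exact absurd this.2.2 (not_le.mpr h)
  · rcases lt_or_ge t b₁ with h | h
    · apply continuousWithinAt_of_notMem_closure
      intro hcl
      have : (z, t) ∈ (univ : Set Z) ×ˢ Icc b₁ b₂ :=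
        closure_minimal (prod_mono (subset_univ N) subset_rfl)
          (isClosed_univ.prod isClosed_Icc) hcl
      exact absurd this.2.1 (not_le.mpr h)
    · have hwB : (z, t) ∈ B := by
        rcases hw with ⟨hz, _, ht⟩ | hB'
        · exact ⟨hz, h, le_trans ht hb⟩
        · exact hB'
      refine ((h2.continuousWithinAt hwB).congr ?_ ?_)
      · rintro ⟨z', t'⟩ ⟨hz', ht', _⟩
        by_cases h' : t' ≤ b₁
        · have : t' = b₁ := le_antisymm h' ht'
          simp only [this, if_pos le_rfl]; exact heq z' hz'
        · simp [h']
      · by_cases h' : t ≤ b₁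
        · have : t = b₁ := le_antisymm h' h
          simp only [this, if_pos le_rfl]; exact heq z hwB.1
        · simp [h']

lemma local_lift {E X Z : Type*} [TopologicalSpace E] [TopologicalSpace X] [TopologicalSpace Z]
    (p : C(E,X)) (hloc : IsLocalHomeomorph p) (hp : ContPathCovering p)
    (f : C(Z,E)) (g : C(Z × I, X)) (hg : ∀ z, g (z,0) = p (f z)) (z₀ : Z)
    (α₀ : C(I,E)) (hα0 : α₀ 0 = f z₀) (hαp : ∀ t, p (α₀ t) = g (z₀, t)) :
    ∃ N : Set Z, IsOpen N ∧ z₀ ∈ N ∧ ∃ H : Z × I → E,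
      ContinuousOn H (N ×ˢ (univ : Set I)) ∧ (∀ z ∈ N, H (z,0) = f z) ∧
      (∀ z ∈ N, ∀ t, p (H (z,t)) = g (z,t)) := by
  choose φ hφmem hφeq using fun t : I => hloc (α₀ t)
  obtain ⟨δ, hδ, hle⟩ := lebesgue_number_lemma_of_metric (s := (univ : Set I))
    (c := fun t => α₀ ⁻¹' (φ t).source) isCompact_univ
    (fun t => (φ t).open_source.preimage α₀.continuous)
    (fun t _ => Set.mem_iUnion.mpr ⟨t, hφmem t⟩)
  obtain ⟨n, hn⟩ := exists_nat_one_div_lt hδ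
  set c : ℕ → I := fun i => Set.projIcc 0 1 zero_le_one ((i : ℝ) / (n + 1)) with hc
  have hc0 : c 0 = 0 := by
    simp only [hc, Nat.cast_zero, zero_div]
    exact Set.projIcc_left _
  have hctop : c (n+1) = 1 := by
    have : ((n+1 : ℕ) : ℝ) / (n + 1) = 1 := by
      rw [div_eq_one_iff_eq (by positivity)]; push_cast; ring
    simp only [hc, this]
    exact Set.projIcc_right _
  have hcmono : Monotone c := fun i j hij =>
    Set.monotone_projIcc zero_le_one
      (div_le_div_of_nonneg_right (by exact_mod_cast hij) (by positivity))
  have hdist : ∀ i : ℕ, dist (c (i+1)) (c i) ≤ 1/(n+1) := by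
    intro i
    have h1 := (LipschitzWith.projIcc (a := (0:ℝ)) (b := 1) zero_le_one).dist_le_mul
      (((i+1 : ℕ) : ℝ) / (n + 1)) ((i : ℝ) / (n + 1))
    rw [NNReal.coe_one, one_mul] at h1
    refine le_trans h1 ?_
    rw [Real.dist_eq, div_sub_div_same]
    rw [show (((i+1 : ℕ) : ℝ) - i) = 1 by push_cast; ring]
    rw [abs_of_nonneg (by positivity)]
  have key : ∀ i : ℕ, Set.Icc (c i) (c (i+1)) ⊆ Metric.ball (c i) δ := by
    intro i t ht
    have ht1 : (c i : ℝ) ≤ t := ht.1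
    have ht2 : (t : ℝ) ≤ c (i+1) := ht.2
    rw [Metric.mem_ball, Subtype.dist_eq, Real.dist_eq,
      abs_of_nonneg (sub_nonneg.mpr ht1)]
    have h2 : (t : ℝ) - c i ≤ (c (i+1) : ℝ) - c i := sub_le_sub_right ht2 _
    refine lt_of_le_of_lt (h2.trans ?_) hn
    calc (c (i+1) : ℝ) - c i ≤ |(c (i+1) : ℝ) - (c i : ℝ)| := le_abs_self _
    _ = dist (c (i+1)) (c i) := by rw [Subtype.dist_eq, Real.dist_eq]
    _ ≤ 1/(n+1) := hdist i
  -- chart for each segment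
  have seg : ∀ i : ℕ, ∃ ψ : OpenPartialHomeomorph E X, (⇑p = ⇑ψ) ∧
      ∀ t ∈ Set.Icc (c i) (c (i+1)), α₀ t ∈ ψ.source := by
    intro i
    obtain ⟨ts, hts⟩ := hle (c i) (Set.mem_univ _)
    exact ⟨φ ts, hφeq ts, fun t ht => hts (key i ht)⟩
  choose ψ hψp hψmem using seg
  -- induction
  have main : ∀ i : ℕ, ∃ N : Set Z, IsOpen N ∧ z₀ ∈ N ∧ ∃ H : Z × I → E,
      ContinuousOn H (N ×ˢ Set.Icc 0 (c i)) ∧ (∀ z ∈ N, H (z,0) = f z) ∧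
      (∀ z ∈ N, ∀ t ≤ c i, p (H (z,t)) = g (z,t)) ∧ (∀ t ≤ c i, H (z₀,t) = α₀ t) := by
    intro i
    induction i with
    | zero =>
      refine ⟨Set.univ, isOpen_univ, Set.mem_univ _, fun w => f w.1,
        (f.continuous.comp continuous_fst).continuousOn, fun z _ => rfl, ?_, ?_⟩
      · intro z _ t ht
        have ht0 : t = 0 := le_antisymm (hc0 ▸ ht) unitInterval.nonneg'
        rw [ht0, hg z]
      · intro t ht
        have ht0 : t = 0 := le_antisymm (hc0 ▸ ht) unitInterval.nonneg'
        rw [ht0, hα0]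
    | succ i ih =>
      obtain ⟨N, hNo, hNz, H, hHc, hH0, hHp, hHα⟩ := ih
      -- new neighborhood
      have hci : c i ∈ Set.Icc (0 : I) (c i) := ⟨unitInterval.nonneg', le_rfl⟩
      have hcont_slice : ContinuousOn (fun z => H (z, c i)) N :=
        hHc.comp (Continuous.continuousOn (by fun_prop)) (fun z hz => ⟨hz, hci⟩)
      set S₂ := N ∩ (fun z => H (z, c i)) ⁻¹' (ψ i).source with hS₂
      have hS₂o : IsOpen S₂ := hcont_slice.isOpen_inter_preimage hNo (ψ i).open_source
      set S₃ := (g.curry) ⁻¹' {h : C(I, X) | Set.MapsTo h (Set.Icc (c i) (c (i+1))) (ψ i).target}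
        with hS₃
      have hS₃o : IsOpen S₃ :=
        (ContinuousMap.isOpen_setOf_mapsTo isClosed_Icc.isCompact (ψ i).open_target).preimage
          g.curry.continuous
      refine ⟨S₂ ∩ S₃, hS₂o.inter hS₃o, ⟨⟨hNz, ?_⟩, ?_⟩, ?_⟩
      · show H (z₀, c i) ∈ (ψ i).source
        rw [hHα (c i) le_rfl]
        exact hψmem i (c i) ⟨le_rfl, hcmono (Nat.le_succ i)⟩
      · intro t ht
        show g (z₀, t) ∈ (ψ i).target
        rw [← hαp t, hψp i]
        exact (ψ i).map_source (hψmem i t ht)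
      · -- the new lift
        refine ⟨fun w => if w.2 ≤ c i then H w else (ψ i).symm (g w), ?_, ?_, ?_, ?_⟩
        · have hh1 : ContinuousOn H ((S₂ ∩ S₃) ×ˢ Set.Icc 0 (c i)) :=
            hHc.mono (Set.prod_mono (fun z hz => hz.1.1) subset_rfl)
          have hh2 : ContinuousOn (fun w : Z × I => (ψ i).symm (g w))
              ((S₂ ∩ S₃) ×ˢ Set.Icc (c i) (c (i+1))) := by
            refine ContinuousOn.comp (ψ i).symm.continuousOn
              g.continuous.continuousOn ?_
            rintro ⟨z, t⟩ ⟨hz, ht⟩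
            exact hz.2 ht
          have hheq : ∀ z ∈ S₂ ∩ S₃, H (z, c i) = (ψ i).symm (g (z, c i)) := by
            rintro z ⟨hz2, hz3⟩
            have h1 : H (z, c i) ∈ (ψ i).source := hz2.2
            have h2 : (ψ i) (H (z, c i)) = g (z, c i) := by
              rw [← hψp i]; exact hHp z hz2.1 (c i) le_rfl
            rw [← h2, (ψ i).left_inv h1]
          exact glueOn (hcmono (Nat.le_succ i)) hh1 hh2 hheq
        · intro z hz
          simp only [if_pos (unitInterval.nonneg' : (0:I) ≤ c i)]
          exact hH0 z hz.1.1
        · intro z hz t ht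
          by_cases h' : t ≤ c i
          · simp only [if_pos h']
            exact hHp z hz.1.1 t h'
          · simp only [if_neg h']
            have hmem : g (z, t) ∈ (ψ i).target := hz.2 ⟨le_of_not_ge h', ht⟩
            rw [hψp i]
            exact (ψ i).right_inv hmem
        · intro t ht
          by_cases h' : t ≤ c i
          · simp only [if_pos h']; exact hHα t h'
          · simp only [if_neg h']
            have hmem : α₀ t ∈ (ψ i).source := hψmem i t ⟨le_of_not_ge h', ht⟩
            rw [← hαp t, hψp i, (ψ i).left_inv hmem]
  obtain ⟨N, hNo, hNz, H, hHc, hH0, hHp, _⟩ := main (n+1)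
  have huniv : Set.Icc (0:I) (c (n+1)) = Set.univ := by
    rw [hctop]
    ext t; simp [unitInterval.nonneg', unitInterval.le_one']
  refine ⟨N, hNo, hNz, H, huniv ▸ hHc, hH0, fun z hz t => hHp z hz t (hctop ▸ unitInterval.le_one')⟩

/-- Every semicovering map (a local homeomorphism with the continuous
path-covering property) is a Hurewicz fibration with discrete fibers. -/
theorem stmt12 {E X : Type*} [TopologicalSpace E] [TopologicalSpace X] (p : C(E, X))
    (hloc : IsLocalHomeomorph p) (hp : ContPathCovering p) :
    (∀ (Z : Type u_3) [TopologicalSpace Z], HLP p Z) ∧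
      ∀ x : X, DiscreteTopology {e : E // p e = x} := by
  constructor
  · intro Z _ f g hg
    have hsur : ∀ z : Z, ∃ α : C(I,E), α 0 = f z ∧ ∀ t, p (α t) = g (z,t) := by
      intro z
      obtain ⟨α, hα⟩ := (hp (f z)).bijective.surjective
        ⟨g.comp ⟨fun t => (z,t), by fun_prop⟩, hg z⟩
      refine ⟨α.1, α.2, fun t => ?_⟩
      have := congrArg Subtype.val hα
      exact ContinuousMap.congr_fun this t
    choose A hA0 hAp using hsur
    have hcontG : Continuous (fun w : Z × I => A w.1 w.2) := by
      rw [continuous_iff_continuousAt]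
      intro w
      obtain ⟨N, hNo, hNz, H, hHc, hH0, hHp⟩ :=
        local_lift p hloc hp f g hg w.1 (A w.1) (hA0 w.1) (fun t => hAp w.1 t)
      have hagree : ∀ z ∈ N, ∀ t, H (z,t) = A z t := by
        intro z hz
        have hcont : Continuous (fun t => H (z,t)) := by
          rw [← continuousOn_univ]
          exact hHc.comp (Continuous.continuousOn (by fun_prop))
            (fun t _ => ⟨hz, Set.mem_univ t⟩)
        have heq := lift_unique p hp ⟨fun t => H (z,t), hcont⟩ (A z)
          (by simp only [ContinuousMap.coe_mk]; rw [hH0 z hz, hA0 z])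
          (fun t => by simp only [ContinuousMap.coe_mk]; rw [hHp z hz t, hAp z t])
        exact fun t => ContinuousMap.congr_fun heq t
      have hNopen : IsOpen (N ×ˢ (Set.univ : Set I)) := hNo.prod isOpen_univ
      have hw : w ∈ N ×ˢ (Set.univ : Set I) := ⟨hNz, Set.mem_univ _⟩
      have h1 : ContinuousAt H w := hHc.continuousAt (hNopen.mem_nhds hw)
      refine h1.congr ?_
      exact Filter.eventuallyEq_of_mem (hNopen.mem_nhds hw)
        (fun y hy => hagree y.1 hy.1 y.2)
    exact ⟨⟨fun w => A w.1 w.2, hcontG⟩, fun w => hAp w.1 w.2, fun z => hA0 z⟩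
  · intro x
    refine discreteTopology_iff_isOpen_singleton.mpr fun e => ?_
    obtain ⟨φ, hmem, hpe⟩ := hloc e.1
    have hset : ({e} : Set {e' : E // p e' = x}) = Subtype.val ⁻¹' φ.source := by
      ext e'
      simp only [Set.mem_singleton_iff, Set.mem_preimage]
      constructor
      · rintro rfl; exact hmem
      · intro h
        apply Subtype.ext
        apply φ.injOn h hmem
        show φ e'.1 = φ e.1
        rw [← hpe]
        show p e'.1 = p e.1
        rw [e'.2, e.2]
      -- note: injOn signature
    rw [hset]
    exact φ.open_source.preimage continuous_subtype_val
end

section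
/- If p : E → X has the path-covering property, the homotopy lifting property with respect to I, and p_# : π₁(E,e) → π₁(X,p(e)) is surjective for some e ∈ E, then p is a continuous bijection. -/
open unitInterval Topology

open CategoryTheory

private lemma grpd {C : Type*} [Category C] {x y : C} (P : x ⟶ y) (S : y ⟶ x)
    (A : y ⟶ y) (G : x ⟶ x)
    (hSP : S ≫ P = 𝟙 y) (h : G = (P ≫ A) ≫ S) :
    (S ≫ G) ≫ P = A := by
  subst h
  simp only [Category.assoc, hSP, Category.comp_id]
  rw [← Category.assoc, hSP, Category.id_comp]

attribute [local instance] Path.Homotopic.setoid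

/-- Unique path lifting, from injectivity of `indMap`. -/
private lemma upl {E X : Type*} [TopologicalSpace E] [TopologicalSpace X] (p : C(E, X))
    (hp : PathCovering p) (α β : C(I, E)) (h0 : α 0 = β 0)
    (hproj : ∀ s, p (α s) = p (β s)) : ∀ s, α s = β s := by
  have := (hp (α 0)).1 (a₁ := ⟨α, rfl⟩) (a₂ := ⟨β, h0.symm⟩)
    (by apply Subtype.ext; exact ContinuousMap.ext fun s => hproj s)
  intro s
  exact ContinuousMap.congr_fun (congrArg Subtype.val this) s

/-- Monodromy: lifts of endpoint-homotopic paths with the same start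
have the same end. -/
private lemma mono {E X : Type*} [TopologicalSpace E] [TopologicalSpace X] (p : C(E, X))
    (hp : PathCovering p) (hlp : HLP p I) (α β : C(I, E)) (h0 : α 0 = β 0)
    (H : C(I × I, X)) (hH0 : ∀ s, H (s, 0) = p (α s)) (hH1 : ∀ s, H (s, 1) = p (β s))
    (hl : ∀ t, H (0, t) = p (α 0)) (hr : ∀ t, H (1, t) = p (α 1)) :
    α 1 = β 1 := by
  obtain ⟨G, hGp, hG0⟩ := hlp α H hH0
  have hc0 : ∀ t : I, G (0, t) = α 0 := by
    have := upl p hp ⟨fun t => G (0, t), by fun_prop⟩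
      (ContinuousMap.const I (α 0)) (by simpa using hG0 0)
      (fun t => by simpa [hGp (0, t)] using hl t)
    simpa using this
  have hc1 : ∀ t : I, G (1, t) = α 1 := by
    have := upl p hp ⟨fun t => G (1, t), by fun_prop⟩
      (ContinuousMap.const I (α 1)) (by simpa using hG0 1)
      (fun t => by simpa [hGp (1, t)] using hr t)
    simpa using this
  have hrow := upl p hp ⟨fun s => G (s, 1), by fun_prop⟩ β
    (by simpa [hc0 1] using h0)
    (fun s => by simpa [hGp (s, 1)] using hH1 s)
  have := hrow 1
  simp only [ContinuousMap.coe_mk] at this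
  rw [hc1 1] at this
  exact this

/-- Basepoint change for `π₁`-surjectivity. -/
private lemma conj {E X : Type*} [TopologicalSpace E] [TopologicalSpace X]
    [PathConnectedSpace E] (p : C(E, X)) (e : E)
    (hsurj : ∀ α : Path (p e) (p e), ∃ γ : Path e e,
      (γ.map p.continuous).Homotopic α)
    (a : E) (α : Path (p a) (p a)) : ∃ γ : Path a a,
      (γ.map p.continuous).Homotopic α := by
  obtain ⟨η⟩ := PathConnectedSpace.joined e a
  set pη : Path (p e) (p a) := η.map p.continuous with hpη
  obtain ⟨γ₀, hγ₀⟩ := hsurj ((pη.trans α).trans pη.symm)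
  refine ⟨(η.symm.trans γ₀).trans η, ?_⟩
  suffices hq : (⟦((η.symm.trans γ₀).trans η).map p.continuous⟧ :
      Path.Homotopic.Quotient (p a) (p a)) = ⟦α⟧ from Quotient.exact hq
  have h1 : (⟦((η.symm.trans γ₀).trans η).map p.continuous⟧ :
      Path.Homotopic.Quotient (p a) (p a)) =
      ⟦(pη.symm.trans (γ₀.map p.continuous)).trans pη⟧ := by
    rw [Path.map_trans, Path.map_trans, Path.map_symm]
  rw [h1]
  have h2 : (⟦γ₀.map p.continuous⟧ : Path.Homotopic.Quotient (p e) (p e)) =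
      ⟦(pη.trans α).trans pη.symm⟧ := Quotient.sound hγ₀
  let A : FundamentalGroupoid.mk (p a) ⟶ FundamentalGroupoid.mk (p a) := ⟦α⟧
  let P : FundamentalGroupoid.mk (p e) ⟶ FundamentalGroupoid.mk (p a) := ⟦pη⟧
  let S : FundamentalGroupoid.mk (p a) ⟶ FundamentalGroupoid.mk (p e) := ⟦pη.symm⟧
  have hSP : S ≫ P = 𝟙 _ :=
    Quotient.sound ⟨(Path.Homotopy.reflSymmTrans pη).symm⟩
  exact grpd P S A _ hSP h2

/-- If `p` has the path-covering property, the homotopy lifting property with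
respect to `I`, and is `π₁`-surjective at some point, then `p` is a continuous
bijection. -/
theorem stmt14 {E X : Type*} [TopologicalSpace E] [TopologicalSpace X]
    [PathConnectedSpace E] [PathConnectedSpace X] (p : C(E, X))
    (hp : PathCovering p) (hlp : HLP p I) (e : E)
    (hsurj : ∀ α : Path (p e) (p e), ∃ γ : Path e e,
      (γ.map p.continuous).Homotopic α) :
    Function.Bijective p := by
  constructor
  · -- injective
    intro a b hab
    obtain ⟨δ⟩ := PathConnectedSpace.joined a b
    obtain ⟨γ, hγ⟩ := conj p e hsurj a ((δ.map p.continuous).cast rfl hab)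
    obtain ⟨F⟩ := hγ
    have h := mono p hp hlp γ.toContinuousMap δ.toContinuousMap (by simp)
      ⟨fun w => F (w.2, w.1), by fun_prop⟩
      (fun s => by simp) (fun s => by simp) (fun t => by simp) (fun t => by simp)
    simpa using h
  · -- surjective
    intro x
    obtain ⟨sp⟩ := PathConnectedSpace.joined (p e) x
    obtain ⟨⟨α, hα0⟩, hα⟩ := (hp e).2 ⟨sp.toContinuousMap, by simp⟩
    refine ⟨α 1, ?_⟩
    have := ContinuousMap.congr_fun (congrArg Subtype.val hα) 1
    simpa [indMap] using this
end

section
/- If p : E → X has the continuous path-covering property and {e} is closed in E, then the induced map Ωⁿ(p) : Ωⁿ(E,e) → Ωⁿ(X,p(e)) on n-fold loop spaces with the compact-open topology is a closed topological embedding for n = 1 and a homeomorphism for n ≥ 2. -/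
open unitInterval Topology

/-- The `n`-fold loop space `Ωⁿ(Y,y)`: maps `(Iⁿ, ∂Iⁿ) → (Y, y)` with the
compact-open topology. -/
abbrev LoopSp (n : ℕ) (Y : Type*) [TopologicalSpace Y] (y : Y) : Type _ :=
  {f : C((Fin n → I), Y) // ∀ t : Fin n → I, (∃ i, t i = 0 ∨ t i = 1) → f t = y}

/-! ### Auxiliary machinery -/

/-- Splitting off the first coordinate of the cube. -/
def finSplitH (m : ℕ) : (Fin (m + 1) → I) ≃ₜ ((Fin m → I) × I) where
  toFun t := (Fin.tail t, t 0)
  invFun z := Fin.cons z.2 z.1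
  left_inv t := Fin.cons_self_tail t
  right_inv z := by simp [Fin.tail_cons]
  continuous_toFun := by
    refine Continuous.prodMk (continuous_pi fun i => ?_) (continuous_apply 0)
    exact continuous_apply _
  continuous_invFun := by
    refine continuous_pi fun i => ?_
    refine Fin.cases ?_ (fun j => ?_) i
    · simpa using continuous_snd
    · simpa [Function.comp_def] using (continuous_apply j).comp continuous_fst

/-- The currying homeomorphism `C(I^{m+1}, Y) ≃ₜ C(I^m, C(I, Y))`. -/
def theta (m : ℕ) (Y : Type*) [TopologicalSpace Y] :
    C((Fin (m + 1) → I), Y) ≃ₜ C((Fin m → I), C(I, Y)) :=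
  (Homeomorph.arrowCongr (finSplitH m) (Homeomorph.refl Y)).trans Homeomorph.curry

@[simp] lemma theta_apply {m : ℕ} {Y : Type*} [TopologicalSpace Y]
    (f : C((Fin (m + 1) → I), Y)) (z : Fin m → I) (t : I) :
    theta m Y f z t = f (Fin.cons t z) := rfl

@[simp] lemma theta_symm_apply {m : ℕ} {Y : Type*} [TopologicalSpace Y]
    (k : C((Fin m → I), C(I, Y))) (w : Fin (m + 1) → I) :
    (theta m Y).symm k w = k (Fin.tail w) (w 0) := rfl

/-- The induced map on `n`-fold loop spaces. -/
def loopPush {E X : Type*} [TopologicalSpace E] [TopologicalSpace X] (p : C(E, X)) (e : E)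
    (n : ℕ) : LoopSp n E e → LoopSp n X (p e) :=
  fun f => ⟨p.comp f.1, fun t ht => by simp [f.2 t ht]⟩

/-- Constant inclusion `I → I¹`. -/
def c01 : C(I, Fin 1 → I) := ⟨fun s _ => s, continuous_pi fun _ => continuous_id⟩

/-- `C(I¹, Y) ≃ₜ C(I, Y)`. -/
def loopUncurry1 (Y : Type*) [TopologicalSpace Y] : C((Fin 1 → I), Y) ≃ₜ C(I, Y) where
  toFun f := f.comp c01
  invFun k := k.comp ⟨fun t => t 0, continuous_apply 0⟩
  left_inv f := by
    ext t
    exact congrArg f (funext fun i => by rw [Subsingleton.elim i 0]; rfl)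
  right_inv k := by ext s; rfl
  continuous_toFun := ContinuousMap.continuous_precomp c01
  continuous_invFun := ContinuousMap.continuous_precomp _

/-- Inclusion of the loop space into the based path space. -/
def iota {Y : Type*} [TopologicalSpace Y] (y : Y) : LoopSp 1 Y y → PS Y y :=
  fun f => ⟨f.1.comp c01, f.2 _ ⟨0, Or.inl rfl⟩⟩

lemma iota_continuous {Y : Type*} [TopologicalSpace Y] (y : Y) : Continuous (iota y) :=
  ((ContinuousMap.continuous_precomp c01).comp continuous_subtype_val).subtype_mk _

lemma iota_isEmbedding {Y : Type*} [TopologicalSpace Y] (y : Y) : IsEmbedding (iota y) := by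
  have hcomp : (Subtype.val ∘ iota y) = ⇑(loopUncurry1 Y) ∘ (Subtype.val :
      LoopSp 1 Y y → C((Fin 1 → I), Y)) := funext fun f => rfl
  exact IsEmbedding.of_comp (iota_continuous y) continuous_subtype_val
    (hcomp ▸ (loopUncurry1 Y).isEmbedding.comp IsEmbedding.subtypeVal)

section Lift

variable {E X : Type*} [TopologicalSpace E] [TopologicalSpace X] (p : C(E, X))
  (hp : ContPathCovering p) (e : E)

include hp in
/-- Unique lifting of constant paths. -/
lemma const_lift (e₀ : E) (α : C(I, E)) (h0 : α 0 = e₀)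
    (hc : ∀ t, p (α t) = p e₀) : ∀ t, α t = e₀ := by
  have key : (⟨α, h0⟩ : PS E e₀) = ⟨ContinuousMap.const I e₀, rfl⟩ := by
    refine (hp e₀).bijective.injective ?_
    refine Subtype.ext (ContinuousMap.ext fun t => ?_)
    simpa [indMap] using hc t
  intro t
  exact congrArg (fun β : PS E e₀ => β.1 t) key

/-- The canonical homeomorphism on path spaces coming from `hp`. -/
noncomputable def pathHomeo : PS E e ≃ₜ PS X (p e) := (hp e).homeomorph (indMap p e)

lemma pathHomeo_apply (α : PS E e) : pathHomeo p hp e α = indMap p e α := rfl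

variable {m : ℕ}

lemma slice_starts (g : LoopSp (m + 1) X (p e)) (z : Fin m → I) :
    (theta m X g.1) z 0 = p e := by
  refine g.2 _ ⟨0, Or.inl ?_⟩
  simp [finSplitH]

/-- The lift of the slice path of `g` at `z`. -/
noncomputable def liftPath (g : LoopSp (m + 1) X (p e)) (z : Fin m → I) : PS E e :=
  (pathHomeo p hp e).symm ⟨(theta m X g.1) z, slice_starts p e g z⟩

lemma liftPath_lifts (g : LoopSp (m + 1) X (p e)) (z : Fin m → I) (t : I) :
    p ((liftPath p hp e g z).1 t) = g.1 (Fin.cons t z) := by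
  have : pathHomeo p hp e ((pathHomeo p hp e).symm ⟨(theta m X g.1) z, slice_starts p e g z⟩)
      = ⟨(theta m X g.1) z, slice_starts p e g z⟩ := (pathHomeo p hp e).apply_symm_apply _
  exact congrArg (fun β : PS X (p e) => β.1 t) this

lemma liftPath_zero (g : LoopSp (m + 1) X (p e)) (z : Fin m → I) :
    (liftPath p hp e g z).1 0 = e := (liftPath p hp e g z).2

/-- On boundary slices the lift is constant at `e`. -/
lemma liftPath_boundary (g : LoopSp (m + 1) X (p e)) (z : Fin m → I)
    (hz : ∃ i, z i = 0 ∨ z i = 1) (t : I) : (liftPath p hp e g z).1 t = e := by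
  refine const_lift p hp e _ (liftPath_zero p hp e g z) (fun t => ?_) t
  rw [liftPath_lifts]
  obtain ⟨i, hi⟩ := hz
  exact g.2 _ ⟨i.succ, by simpa using hi⟩

/-- The lifted slices, as a continuous family. -/
noncomputable def liftFam (g : LoopSp (m + 1) X (p e)) : C((Fin m → I), C(I, E)) :=
  ⟨fun z => (liftPath p hp e g z).1,
    continuous_subtype_val.comp ((pathHomeo p hp e).symm.continuous.comp
      ((map_continuous (theta m X g.1)).subtype_mk _))⟩

/-- For `m ≥ 1`, the endpoints of the lifted slices are all `e`. -/
lemma liftPath_one (hm : 1 ≤ m) (g : LoopSp (m + 1) X (p e)) (z : Fin m → I) :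
    (liftPath p hp e g z).1 1 = e := by
  have mem : ∀ (u : I) (i : Fin m), (u : ℝ) * (z i : ℝ) ∈ I := by
    intro u i
    exact ⟨mul_nonneg u.2.1 (z i).2.1, mul_le_one₀ u.2.2 (z i).2.1 (z i).2.2⟩
  set c : C(I, Fin m → I) := ⟨fun u i => ⟨(u : ℝ) * (z i : ℝ), mem u i⟩,
    continuous_pi fun i => (continuous_subtype_val.mul continuous_const).subtype_mk _⟩ with hc
  set α : C(I, E) := ⟨fun u => (liftFam p hp e g) (c u) 1,
    (ContinuousEvalConst.continuous_eval_const (1 : I)).comp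
      ((map_continuous (liftFam p hp e g)).comp (map_continuous c))⟩
  have h0 : α 0 = e := by
    have hc0 : c 0 = fun _ => 0 := by
      funext i; exact Subtype.ext (by simp [hc])
    show (liftFam p hp e g) (c 0) 1 = e
    rw [hc0]
    exact liftPath_boundary p hp e g (fun _ => 0) ⟨⟨0, hm⟩, Or.inl rfl⟩ 1
  have hc1 : ∀ u, p (α u) = p e := by
    intro u
    show p ((liftPath p hp e g (c u)).1 1) = p e
    rw [liftPath_lifts]
    exact g.2 _ ⟨0, Or.inr (by simp)⟩
  have hend := const_lift p hp e α h0 hc1 1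
  have hcz : c 1 = z := by
    funext i; exact Subtype.ext (by simp [hc])
  have h1 : (liftFam p hp e g) (c 1) 1 = e := hend
  rw [hcz] at h1
  exact h1

/-- The underlying continuous map of the lifted loop. -/
noncomputable def liftLoopFun (g : LoopSp (m + 1) X (p e)) : C((Fin (m + 1) → I), E) :=
  (theta m E).symm (liftFam p hp e g)

lemma liftLoopFun_apply (g : LoopSp (m + 1) X (p e)) (w : Fin (m + 1) → I) :
    liftLoopFun p hp e g w = (liftPath p hp e g (Fin.tail w)).1 (w 0) := rfl

lemma liftLoopFun_lifts (g : LoopSp (m + 1) X (p e)) (w : Fin (m + 1) → I) :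
    p (liftLoopFun p hp e g w) = g.1 w := by
  rw [liftLoopFun_apply, liftPath_lifts, Fin.cons_self_tail]

lemma liftLoopFun_continuous :
    Continuous fun g : LoopSp (m + 1) X (p e) => liftLoopFun p hp e g := by
  refine (theta m E).symm.continuous.comp ?_
  refine ContinuousMap.continuous_of_continuous_uncurry _ ?_
  show Continuous fun q : LoopSp (m + 1) X (p e) × (Fin m → I) => (liftPath p hp e q.1 q.2).1
  refine continuous_subtype_val.comp ((pathHomeo p hp e).symm.continuous.comp ?_)
  refine Continuous.subtype_mk ?_ _
  show Continuous fun q : LoopSp (m + 1) X (p e) × (Fin m → I) => (theta m X q.1.1) q.2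
  exact ContinuousEval.continuous_eval.comp
    (((theta m X).continuous.comp (continuous_subtype_val.comp continuous_fst)).prodMk
      continuous_snd)

include hp in
lemma loopPush_injective : Function.Injective (loopPush p e (m + 1)) := by
  intro f₁ f₂ h
  have h' : p.comp f₁.1 = p.comp f₂.1 := congrArg Subtype.val h
  apply Subtype.ext
  have key : ∀ z : Fin m → I, (theta m E f₁.1) z = (theta m E f₂.1) z := by
    intro z
    have s₁ : (theta m E f₁.1) z 0 = e := f₁.2 _ ⟨0, Or.inl (by simp [finSplitH])⟩
    have s₂ : (theta m E f₂.1) z 0 = e := f₂.2 _ ⟨0, Or.inl (by simp [finSplitH])⟩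
    have := (hp e).bijective.injective (a₁ := ⟨(theta m E f₁.1) z, s₁⟩)
      (a₂ := ⟨(theta m E f₂.1) z, s₂⟩) ?_
    · exact congrArg Subtype.val this
    · refine Subtype.ext (ContinuousMap.ext fun t => ?_)
      show p (f₁.1 (Fin.cons t z)) = p (f₂.1 (Fin.cons t z))
      exact congrFun (congrArg (fun q : C((Fin (m+1) → I), X) => ⇑q) h') _
  have : theta m E f₁.1 = theta m E f₂.1 := ContinuousMap.ext key
  exact (theta m E).toEquiv.injective this

lemma loopPush_continuous (n : ℕ) : Continuous (loopPush p e n) :=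
  (((ContinuousMap.continuous_postcomp p).comp continuous_subtype_val)).subtype_mk _

end Lift

/-- If `p` has the continuous path-covering property and `{e}` is closed, then the
induced map `Ωⁿ(E,e) → Ωⁿ(X,p e)` is a closed embedding for `n = 1` and a
homeomorphism for `n ≥ 2`. -/
theorem stmt15 {E X : Type*} [TopologicalSpace E] [TopologicalSpace X] (p : C(E, X))
    (hp : ContPathCovering p) (e : E) (he : IsClosed ({e} : Set E)) (n : ℕ) :
    (n = 1 → IsClosedEmbedding (fun f : LoopSp n E e =>
      (⟨p.comp f.1, fun t ht => by simp [f.2 t ht]⟩ : LoopSp n X (p e)))) ∧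
    (2 ≤ n → IsHomeomorph (fun f : LoopSp n E e =>
      (⟨p.comp f.1, fun t ht => by simp [f.2 t ht]⟩ : LoopSp n X (p e)))) := by
  constructor
  · -- n = 1 : closed embedding
    rintro rfl
    show IsClosedEmbedding (loopPush p e 1)
    have emb : IsEmbedding (loopPush p e 1) := by
      have hcomm : iota (p e) ∘ loopPush p e 1 = indMap p e ∘ iota e :=
        funext fun f => Subtype.ext (ContinuousMap.ext fun s => rfl)
      refine IsEmbedding.of_comp (loopPush_continuous p e 1) (iota_continuous (p e)) ?_
      rw [hcomm]
      exact ((hp e).isEmbedding).comp (iota_isEmbedding e)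

    -- closed range
    let z₀ : Fin 0 → I := fun i => i.elim0
    let ε : LoopSp 1 X (p e) → E := fun g => (liftPath p hp e g z₀).1 1
    have ε_cont : Continuous ε := by
      have : Continuous fun g : LoopSp 1 X (p e) => liftFam p hp e g := by
        refine ContinuousMap.continuous_of_continuous_uncurry _ ?_
        show Continuous fun q : LoopSp 1 X (p e) × (Fin 0 → I) => (liftPath p hp e q.1 q.2).1
        refine continuous_subtype_val.comp ((pathHomeo p hp e).symm.continuous.comp ?_)
        refine Continuous.subtype_mk ?_ _
        show Continuous fun q : LoopSp 1 X (p e) × (Fin 0 → I) => (theta 0 X q.1.1) q.2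
        exact ContinuousEval.continuous_eval.comp
          (((theta 0 X).continuous.comp (continuous_subtype_val.comp continuous_fst)).prodMk
            continuous_snd)
      exact (ContinuousEvalConst.continuous_eval_const (1 : I)).comp
        ((ContinuousEvalConst.continuous_eval_const z₀).comp this)
    have hrange : Set.range (loopPush p e 1) = ε ⁻¹' {e} := by
      ext g
      constructor
      · rintro ⟨f, rfl⟩
        have s₁ : (theta 0 E f.1) z₀ 0 = e := f.2 _ ⟨0, Or.inl (by simp [finSplitH])⟩
        have key : liftPath p hp e (loopPush p e 1 f) z₀ = ⟨(theta 0 E f.1) z₀, s₁⟩ := by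
          have : pathHomeo p hp e ⟨(theta 0 E f.1) z₀, s₁⟩
              = ⟨(theta 0 X (loopPush p e 1 f).1) z₀, slice_starts p e _ z₀⟩ :=
            Subtype.ext (ContinuousMap.ext fun t => rfl)
          rw [liftPath, ← this, Homeomorph.symm_apply_apply]
        show (liftPath p hp e (loopPush p e 1 f) z₀).1 1 ∈ ({e} : Set E)
        rw [key]
        exact f.2 _ ⟨0, Or.inr rfl⟩
      · intro hg
        have hg' : (liftPath p hp e g z₀).1 1 = e := hg
        refine ⟨⟨liftLoopFun p hp e g, ?_⟩, ?_⟩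
        · intro w hw
          obtain ⟨i, hi⟩ := hw
          have hi0 : i = 0 := Subsingleton.elim i 0
          rw [hi0] at hi
          rw [liftLoopFun_apply]
          have htail : Fin.tail w = z₀ := Subsingleton.elim _ _
          rcases hi with h | h
          · rw [h]; exact liftPath_zero p hp e g _
          · rw [h, htail]; exact hg'
        · exact Subtype.ext (ContinuousMap.ext fun w => liftLoopFun_lifts p hp e g w)
    exact ⟨emb, by rw [hrange]; exact he.preimage ε_cont⟩
  · -- n ≥ 2 : homeomorphism
    intro hn
    obtain ⟨m, rfl⟩ : ∃ m, n = m + 1 := ⟨n - 1, by omega⟩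
    have hm : 1 ≤ m := by omega
    show IsHomeomorph (loopPush p e (m + 1))
    rw [isHomeomorph_iff_exists_inverse]
    refine ⟨loopPush_continuous p e (m + 1), ?_⟩
    -- the inverse: lifting loops
    have bd : ∀ g : LoopSp (m + 1) X (p e), ∀ w : Fin (m + 1) → I,
        (∃ i, w i = 0 ∨ w i = 1) → liftLoopFun p hp e g w = e := by
      intro g w hw
      obtain ⟨i, hi⟩ := hw
      rw [liftLoopFun_apply]
      refine Fin.cases (fun hi => ?_) (fun j hi => ?_) i hi
      · rcases hi with h | h
        · rw [h]; exact liftPath_zero p hp e g _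
        · rw [h]; exact liftPath_one p hp e hm g _
      · exact liftPath_boundary p hp e g (Fin.tail w) ⟨j, hi⟩ (w 0)
    refine ⟨fun g => ⟨liftLoopFun p hp e g, bd g⟩, ?_, ?_, ?_⟩
    · intro f
      apply loopPush_injective p hp e
      exact Subtype.ext (ContinuousMap.ext fun w => liftLoopFun_lifts p hp e _ w)
    · intro g
      exact Subtype.ext (ContinuousMap.ext fun w => liftLoopFun_lifts p hp e g w)
    · exact (liftLoopFun_continuous p hp e).subtype_mk _
end

section
/- Suppose p : (E,e₀) → (X,x₀) has the continuous path-covering property, {x₀} is closed in X, and H = p_#(π₁(E,e₀)). Then the function φ : π₁(X,x₀)/H → p⁻¹(x₀) sending the coset H[α] to the endpoint α̃(1) of the unique lift α̃ of α starting at e₀ is a well-defined continuous bijection, where π₁(X,x₀)/H carries the quotient topology inherited from the compact-open topology on Ω(X,x₀). -/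
open unitInterval Topology

/-- The relation on the loop space `Ω(X, p e₀)` identifying loops `α, β` with
`[α·β⁻] ∈ p_#(π₁(E,e₀))`; the quotient is the coset space
`π₁(X,x₀)/p_#(π₁(E,e₀))` with the quotient topology from `Ω(X,x₀)`. -/
def cosetRel {E X : Type*} [TopologicalSpace E] [TopologicalSpace X] (p : C(E, X))
    (e₀ : E) (α β : {f : C(I, X) // f 0 = p e₀ ∧ f 1 = p e₀}) : Prop :=
  ∃ γ : Path e₀ e₀, (γ.map p.continuous).Homotopic
    ((⟨α.1, α.2.1, α.2.2⟩ : Path (p e₀) (p e₀)).trans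
      (⟨β.1, β.2.1, β.2.2⟩ : Path (p e₀) (p e₀)).symm)

section Aux

variable {E X : Type*} [TopologicalSpace E] [TopologicalSpace X]

private lemma extend_eq {Y : Type*} [TopologicalSpace Y] {x y : X} {x' y' : Y}
    (γ : Path x y) (γ' : Path x' y') (f : X → Y)
    (h : ∀ t, f (γ t) = γ' t) (r : ℝ) : f (γ.extend r) = γ'.extend r := by
  simp only [Path.extend, Set.IccExtend_apply]
  exact h _

private lemma comp_trans {Y : Type*} [TopologicalSpace Y]
    {e₀ e₁ e₂ : X} {x₀ x₁ x₂ : Y} (f : X → Y)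
    (γ : Path e₀ e₁) (δ : Path e₁ e₂) (γ' : Path x₀ x₁) (δ' : Path x₁ x₂)
    (hγ : ∀ t, f (γ t) = γ' t) (hδ : ∀ t, f (δ t) = δ' t) (t : I) :
    f ((γ.trans δ) t) = (γ'.trans δ') t := by
  rw [Path.trans_apply, Path.trans_apply]
  split_ifs
  · exact hγ _
  · exact hδ _

/-- Paths projecting to a constant path are constant (unique path lifting). -/
private lemma upl_const (p : C(E, X)) (hp : UniquePathLifting p) (f : C(I, E))
    (hf : ∀ s, p (f s) = p (f 0)) (t : I) : f t = f 0 := by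
  have hσc : Continuous fun s : I => (⟨(s : ℝ) * (t : ℝ),
      unitInterval.mul_mem s.2 t.2⟩ : I) :=
    (continuous_subtype_val.mul continuous_const).subtype_mk _
  set sg : C(I, I) := ⟨fun s => ⟨(s : ℝ) * (t : ℝ), unitInterval.mul_mem s.2 t.2⟩, hσc⟩ with hσ
  have hσ0 : sg 0 = 0 := Subtype.ext (zero_mul _)
  have hσ1 : sg 1 = t := Subtype.ext (one_mul _)
  have hg0 : (f.comp sg) 0 = f 0 := by simp [hσ0]
  have hkey : indMap p (f 0) ⟨f.comp sg, hg0⟩ =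
      indMap p (f 0) ⟨ContinuousMap.const I (f 0), rfl⟩ := by
    apply Subtype.ext
    ext s
    exact hf (sg s)
  have h1 : f (sg 1) = f 0 :=
    ContinuousMap.congr_fun (congrArg Subtype.val (hp (f 0) hkey)) 1
  rwa [hσ1] at h1

/-- Lifts of path-homotopic loops have the same endpoint. -/
private lemma lift_end_eq (p : C(E, X)) (hp : ContPathCovering p) (e₀ : E)
    (γ₁ γ₂ : Path (p e₀) (p e₀)) (h : γ₁.Homotopic γ₂) (u v : PS E e₀)
    (hu : indMap p e₀ u = ⟨γ₁.toContinuousMap, γ₁.source⟩)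
    (hv : indMap p e₀ v = ⟨γ₂.toContinuousMap, γ₂.source⟩) :
    u.1 1 = v.1 1 := by
  classical
  set L : PS E e₀ ≃ₜ PS X (p e₀) := (hp e₀).homeomorph (indMap p e₀) with hLdef
  have hL : ∀ w : PS E e₀, L w = indMap p e₀ w := fun _ => rfl
  obtain ⟨H⟩ := h
  have hc0 : ∀ s : I, (H.toHomotopy.curry s) 0 = p e₀ := fun s => by
    simpa using H.source s
  set c : C(I, PS X (p e₀)) :=
    ⟨fun s => ⟨H.toHomotopy.curry s, hc0 s⟩,
      (H.toHomotopy.curry.continuous).subtype_mk _⟩ with hcdef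
  have hps : ∀ s : I, p ((L.symm (c s)).1 1) = p e₀ := by
    intro s
    have h1 : indMap p e₀ (L.symm (c s)) = c s := by
      rw [← hL, Homeomorph.apply_symm_apply]
    have h2 : p ((L.symm (c s)).1 1) = (c s).1 1 :=
      ContinuousMap.congr_fun (congrArg Subtype.val h1) 1
    rw [h2]
    show H.toHomotopy.curry s 1 = p e₀
    simpa using H.target s
  set f : C(I, E) := ⟨fun s => (L.symm (c s)).1 1,
    (continuous_eval_const 1).comp
      (continuous_subtype_val.comp (L.symm.continuous.comp c.continuous))⟩ with hfdef
  have hf1 : f 1 = f 0 := by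
    refine upl_const p (fun e => (hp e).bijective.injective) f (fun s => ?_) 1
    show p ((L.symm (c s)).1 1) = p ((L.symm (c 0)).1 1)
    rw [hps s, hps 0]
  have hc_zero : c 0 = ⟨γ₁.toContinuousMap, γ₁.source⟩ := by
    apply Subtype.ext
    ext t
    show H.toHomotopy.curry 0 t = γ₁ t
    simpa using H.apply_zero t
  have hc_one : c 1 = ⟨γ₂.toContinuousMap, γ₂.source⟩ := by
    apply Subtype.ext
    ext t
    show H.toHomotopy.curry 1 t = γ₂ t
    simpa using H.apply_one t
  have hu' : L.symm (c 0) = u := by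
    rw [hc_zero, ← hu, ← hL, Homeomorph.symm_apply_apply]
  have hv' : L.symm (c 1) = v := by
    rw [hc_one, ← hv, ← hL, Homeomorph.symm_apply_apply]
  rw [← hu', ← hv']
  exact hf1.symm

end Aux

/-- If `p : (E,e₀) → (X,x₀)` has the continuous path-covering property and
`{x₀}` is closed, then the map `φ : π₁(X,x₀)/H → p⁻¹(x₀)` (`H = p_#(π₁(E,e₀))`)
sending `H[α]` to the endpoint of the unique lift of `α` at `e₀` is a
well-defined continuous bijection. -/
theorem stmt16 {E X : Type*} [TopologicalSpace E] [TopologicalSpace X]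
    [PathConnectedSpace E] [PathConnectedSpace X] (p : C(E, X))
    (hp : ContPathCovering p) (e₀ : E) (hx : IsClosed ({p e₀} : Set X)) :
    ∃ φ : Quot (cosetRel p e₀) → {e : E // p e = p e₀},
      Continuous φ ∧ Function.Bijective φ ∧
      ∀ (α : {f : C(I, X) // f 0 = p e₀ ∧ f 1 = p e₀}) (αt : PS E e₀),
        indMap p e₀ αt = ⟨α.1, α.2.1⟩ → (φ (Quot.mk _ α) : E) = αt.1 1 := by
  classical
  set L : PS E e₀ ≃ₜ PS X (p e₀) := (hp e₀).homeomorph (indMap p e₀) with hLdef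
  have hL : ∀ w : PS E e₀, L w = indMap p e₀ w := fun _ => rfl
  have hLinv : ∀ (u : PS E e₀) (a : PS X (p e₀)), indMap p e₀ u = a → L.symm a = u := by
    intro u a h
    rw [← h, ← hL, Homeomorph.symm_apply_apply]
  have hLeq : ∀ a : PS X (p e₀), indMap p e₀ (L.symm a) = a := by
    intro a
    rw [← hL, Homeomorph.apply_symm_apply]
  -- the underlying map
  set F : {f : C(I, X) // f 0 = p e₀ ∧ f 1 = p e₀} → {e : E // p e = p e₀} :=
    fun α => ⟨(L.symm ⟨α.1, α.2.1⟩).1 1, by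
      have h2 : p ((L.symm ⟨α.1, α.2.1⟩).1 1) = α.1 1 :=
        ContinuousMap.congr_fun (congrArg Subtype.val (hLeq ⟨α.1, α.2.1⟩)) 1
      rw [h2, α.2.2]⟩ with hFdef
  have hFpt : ∀ (α : {f : C(I, X) // f 0 = p e₀ ∧ f 1 = p e₀}) (t : I),
      p ((L.symm ⟨α.1, α.2.1⟩).1 t) = α.1 t := fun α t =>
    ContinuousMap.congr_fun (congrArg Subtype.val (hLeq ⟨α.1, α.2.1⟩)) t
  -- well-definedness
  have hsound : ∀ α β, cosetRel p e₀ α β → F α = F β := by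
    rintro α β ⟨γ, hγ⟩
    set α' : Path (p e₀) (p e₀) := ⟨α.1, α.2.1, α.2.2⟩ with hα'
    set β' : Path (p e₀) (p e₀) := ⟨β.1, β.2.1, β.2.2⟩ with hβ'
    set w : PS E e₀ := L.symm ⟨α.1, α.2.1⟩ with hw
    set v : PS E e₀ := L.symm ⟨β.1, β.2.1⟩ with hv
    set vPath : Path e₀ (v.1 1) := ⟨v.1, v.2, rfl⟩ with hvP
    -- homotopy algebra : (γp)·β ≃ α
    have h1 : ((γ.map p.continuous).trans β').Homotopic ((α'.trans β'.symm).trans β') :=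
      hγ.hcomp (Path.Homotopic.refl β')
    have h2 : ((α'.trans β'.symm).trans β').Homotopic (α'.trans (β'.symm.trans β')) :=
      ⟨Path.Homotopy.transAssoc _ _ _⟩
    have h3 : (β'.symm.trans β').Homotopic (Path.refl (p e₀)) :=
      Path.Homotopic.symm ⟨Path.Homotopy.reflSymmTrans β'⟩
    have h4 : (α'.trans (β'.symm.trans β')).Homotopic (α'.trans (Path.refl (p e₀))) :=
      (Path.Homotopic.refl α').hcomp h3
    have h5 : (α'.trans (Path.refl (p e₀))).Homotopic α' := ⟨Path.Homotopy.transRefl α'⟩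
    have hhom : ((γ.map p.continuous).trans β').Homotopic α' :=
      (h1.trans h2).trans (h4.trans h5)
    -- the lift of (γp)·β is γ·ṽ
    have hpv : ∀ t, p (vPath t) = β' t := fun t => hFpt β t
    have hpγ : ∀ t, p (γ t) = (γ.map p.continuous) t := fun t => rfl
    set u : PS E e₀ := ⟨(γ.trans vPath).toContinuousMap, by simp⟩ with hu
    have hulift : indMap p e₀ u = ⟨((γ.map p.continuous).trans β').toContinuousMap,
        ((γ.map p.continuous).trans β').source⟩ := by
      apply Subtype.ext
      ext t
      exact comp_trans p γ vPath (γ.map p.continuous) β' hpγ hpv t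
    have hwlift : indMap p e₀ w = ⟨α'.toContinuousMap, α'.source⟩ :=
      hLeq ⟨α.1, α.2.1⟩
    have hend : u.1 1 = w.1 1 :=
      lift_end_eq p hp e₀ ((γ.map p.continuous).trans β') α' hhom u w hulift hwlift
    have hu1 : u.1 1 = v.1 1 := (γ.trans vPath).target
    apply Subtype.ext
    show w.1 1 = v.1 1
    rw [← hend, hu1]
  refine ⟨Quot.lift F hsound, ?_, ⟨?_, ?_⟩, ?_⟩
  · exact continuous_quot_lift hsound <| Continuous.subtype_mk
      ((continuous_eval_const 1).comp
        (continuous_subtype_val.comp (L.symm.continuous.comp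
          (Continuous.subtype_mk continuous_subtype_val _)))) _
  · -- injective
    rintro ⟨α⟩ ⟨β⟩ h
    apply Quot.sound
    set α' : Path (p e₀) (p e₀) := ⟨α.1, α.2.1, α.2.2⟩ with hα'
    set β' : Path (p e₀) (p e₀) := ⟨β.1, β.2.1, β.2.2⟩ with hβ'
    set w : PS E e₀ := L.symm ⟨α.1, α.2.1⟩ with hw
    set v : PS E e₀ := L.symm ⟨β.1, β.2.1⟩ with hv
    have hend : w.1 1 = v.1 1 := congrArg Subtype.val h
    set wPath : Path e₀ (w.1 1) := ⟨w.1, w.2, rfl⟩ with hwP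
    set vPath : Path e₀ (v.1 1) := ⟨v.1, v.2, rfl⟩ with hvP
    refine ⟨wPath.trans ((vPath.symm).cast hend rfl), ?_⟩
    have heq : ((wPath.trans ((vPath.symm).cast hend rfl)).map p.continuous) =
        α'.trans β'.symm := by
      ext t
      show p ((wPath.trans ((vPath.symm).cast hend rfl)) t) = (α'.trans β'.symm) t
      refine comp_trans p wPath ((vPath.symm).cast hend rfl) α' β'.symm
        (fun t => hFpt α t) (fun t => ?_) t
      have h1 : ((vPath.symm).cast hend rfl) t = vPath (σ t) := by
        rw [Path.cast_coe]
        rfl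
      rw [h1]
      show p (v.1 (σ t)) = β'.symm t
      exact hFpt β (σ t)
    rw [heq]
  · -- surjective
    rintro ⟨e, he⟩
    set q : Path e₀ e := PathConnectedSpace.somePath e₀ e with hq
    refine ⟨Quot.mk _ ⟨p.comp q.toContinuousMap, by simp, by simp [he]⟩, ?_⟩
    apply Subtype.ext
    show (L.symm _).1 1 = e
    have hlift : indMap p e₀ ⟨q.toContinuousMap, q.source⟩ =
        ⟨p.comp q.toContinuousMap, by simp⟩ := rfl
    rw [hLinv ⟨q.toContinuousMap, q.source⟩ _ hlift]
    exact q.target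
  · -- formula
    intro α αt hα
    show (L.symm ⟨α.1, α.2.1⟩).1 1 = αt.1 1
    rw [hLinv αt ⟨α.1, α.2.1⟩ hα]
end

section
/- Let (X,x₀) be a path-connected space and H ≤ π₁(X,x₀). Let X̃_H = P(X,x₀)/∼ be the quotient of the based path space, where α ∼ β iff α(1) = β(1) and [α·β⁻] ∈ H, and let p_H : X̃_H → X be the endpoint projection. Then the endpoint evaluation map ev₁ : P(X̃_H, x̃_H) → X̃_H (where x̃_H is the class of the constant path) is a quotient map, and the induced map P(p_H) : P(X̃_H, x̃_H) → P(X,x₀) is a topological retraction, i.e. admits a continuous section. -/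
open unitInterval Topology

attribute [local instance] Path.Homotopic.setoid

/-- The homotopy class of a loop, as an element of the fundamental group. -/
noncomputable def loopCls {X : Type u} [TopologicalSpace X] {x₀ : X} (γ : Path x₀ x₀) :
    FundamentalGroup X x₀ :=
  FundamentalGroup.fromPath (X := TopCat.of X) ⟦γ⟧

/-- The relation on `P(X,x₀)` defining `X̃_H`: `α ∼ β` iff `α(1) = β(1)` and
`[α·β⁻] ∈ H`. -/
def pathRel {X : Type u} [TopologicalSpace X] (x₀ : X)
    (H : Subgroup (FundamentalGroup X x₀)) (α β : PS X x₀) : Prop :=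
  ∃ h : α.1 1 = β.1 1,
    loopCls ((⟨α.1, α.2, rfl⟩ : Path x₀ (α.1 1)).trans
      ((⟨β.1, β.2, h.symm⟩ : Path x₀ (α.1 1)).symm)) ∈ H

/-- The space `X̃_H`, the quotient of `P(X,x₀)` by `pathRel`. -/
abbrev XH {X : Type u} [TopologicalSpace X] (x₀ : X)
    (H : Subgroup (FundamentalGroup X x₀)) : Type u :=
  Quot (pathRel x₀ H)

/-- The basepoint `x̃_H` of `X̃_H`: the class of the constant path. -/
def baseptH {X : Type u} [TopologicalSpace X] (x₀ : X)
    (H : Subgroup (FundamentalGroup X x₀)) : XH x₀ H :=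
  Quot.mk _ ⟨ContinuousMap.const I x₀, rfl⟩

/-- The endpoint projection `p_H : X̃_H → X`. -/
def pH {X : Type u} [TopologicalSpace X] (x₀ : X)
    (H : Subgroup (FundamentalGroup X x₀)) : C(XH x₀ H, X) where
  toFun := Quot.lift (fun α : PS X x₀ => α.1 1) (fun _ _ h => h.elim fun h' _ => h')
  continuous_toFun := continuous_quot_lift _
    ((ContinuousEvalConst.continuous_eval_const (1 : I)).comp continuous_subtype_val)

/-- For any path-connected based space `(X,x₀)` and subgroup `H ≤ π₁(X,x₀)`:
the endpoint evaluation `ev₁ : P(X̃_H, x̃_H) → X̃_H` is a quotient map, and the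
induced map `P(p_H) : P(X̃_H, x̃_H) → P(X,x₀)` is a topological retraction,
i.e. it is continuous and admits a continuous section. -/
theorem stmt18 {X : Type u} [TopologicalSpace X] [PathConnectedSpace X] (x₀ : X)
    (H : Subgroup (FundamentalGroup X x₀)) :
    IsQuotientMap (fun α : PS (XH x₀ H) (baseptH x₀ H) => α.1 1) ∧
    Continuous (indMap (pH x₀ H) (baseptH x₀ H)) ∧
    ∃ s : PS X x₀ → PS (XH x₀ H) (baseptH x₀ H), Continuous s ∧
      ∀ α : PS X x₀, indMap (pH x₀ H) (baseptH x₀ H) (s α) = ⟨α.1, α.2⟩ := by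
  classical
  -- continuity of multiplication on I
  have hmul : Continuous fun p : I × I => p.1 * p.2 := by
    apply Continuous.subtype_mk
    exact (continuous_subtype_val.comp continuous_fst).mul
      (continuous_subtype_val.comp continuous_snd)
  -- the evaluation/truncation map
  let E : C((PS X x₀ × I) × I, X) :=
    ⟨fun p => p.1.1.1 (p.1.2 * p.2), by
      have h1 : Continuous fun p : (PS X x₀ × I) × I => (p.1.1.1 : C(I, X)) :=
        continuous_subtype_val.comp (continuous_fst.comp continuous_fst)
      have h2 : Continuous fun p : (PS X x₀ × I) × I => p.1.2 * p.2 :=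
        hmul.comp ((continuous_snd.comp continuous_fst).prodMk continuous_snd)
      exact continuous_eval.comp (h1.prodMk h2)⟩
  -- truncation as a map into PS X x₀
  have htr0 : ∀ p : PS X x₀ × I, (E.curry p) 0 = x₀ := by
    intro p
    show p.1.1 (p.2 * 0) = x₀
    have : p.2 * 0 = 0 := Subtype.ext (by simp)
    rw [this, p.1.2]
  let trunc : PS X x₀ × I → PS X x₀ := fun p => ⟨E.curry p, htr0 p⟩
  have htrunc : Continuous trunc := E.curry.continuous.subtype_mk _
  -- the uncurried section
  let G : C(PS X x₀ × I, XH x₀ H) :=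
    ⟨fun p => Quot.mk _ (trunc p), (continuous_quot_mk).comp htrunc⟩
  let S : C(PS X x₀, C(I, XH x₀ H)) := G.curry
  have hS0 : ∀ α : PS X x₀, (S α) 0 = baseptH x₀ H := by
    intro α
    show Quot.mk _ (trunc (α, 0)) = Quot.mk _ (⟨ContinuousMap.const I x₀, rfl⟩ : PS X x₀)
    congr 1
    apply Subtype.ext
    ext s
    show α.1 ((0 : I) * s) = x₀
    have : (0 : I) * s = 0 := Subtype.ext (by simp)
    rw [this, α.2]
  let s : PS X x₀ → PS (XH x₀ H) (baseptH x₀ H) := fun α => ⟨S α, hS0 α⟩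
  have hscont : Continuous s := S.continuous.subtype_mk _
  have hsec : ∀ α : PS X x₀,
      indMap (pH x₀ H) (baseptH x₀ H) (s α) = ⟨α.1, α.2⟩ := by
    intro α
    apply Subtype.ext
    ext t
    show pH x₀ H (Quot.mk _ (trunc (α, t))) = α.1 t
    show (trunc (α, t)).1 1 = α.1 t
    show α.1 (t * 1) = α.1 t
    congr 1
    exact Subtype.ext (by simp)
  have hind : Continuous (indMap (pH x₀ H) (baseptH x₀ H)) := by
    apply Continuous.subtype_mk
    exact ((pH x₀ H).continuous_postcomp).comp continuous_subtype_val
  refine ⟨?_, hind, s, hscont, hsec⟩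
  -- ev₁ ∘ s = Quot.mk _, a quotient map
  have hev : Continuous (fun α : PS (XH x₀ H) (baseptH x₀ H) => α.1 1) :=
    (continuous_eval_const (1 : I)).comp continuous_subtype_val
  have hcomp : (fun α : PS (XH x₀ H) (baseptH x₀ H) => α.1 1) ∘ s =
      Quot.mk (pathRel x₀ H) := by
    funext α
    show Quot.mk _ (trunc (α, 1)) = Quot.mk _ α
    congr 1
    apply Subtype.ext
    ext t
    show α.1 ((1 : I) * t) = α.1 t
    congr 1
    exact Subtype.ext (by simp)
  exact IsQuotientMap.of_comp hscont hev (hcomp ▸ isQuotientMap_quot_mk)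
end
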